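/- arXiv:1811.10137 — 15 statements merged into one kernel-verified Lean document; each statement's English description precedes it below -/
import Mathlib

section
/- For all indices i, j : Fin n, the folded generators satisfy ⁅H i, E j⁆ = (A i j) • E j (integer scalar action on L). -/
open scoped Classical

/-- The σ-orbit `⟨i⟩` of an index `i`, as a finite set. -/
noncomputable def sigmaOrbit {n : ℕ} (σ : Equiv.Perm (Fin n)) (i : Fin n) : Finset (Fin n) :=
  Finset.univ.filter fun k => σ.SameCycle i k

/-- `b i = 3 − ∑_{k ∈ ⟨i⟩} a k i`. -/
noncomputable def bFold {n : ℕ} (a : Fin n → Fin n → ℤ) (σ : Equiv.Perm (Fin n))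
    (i : Fin n) : ℤ :=
  3 - ∑ k ∈ sigmaOrbit σ i, a k i

/-- The folded Cartan matrix `A i j = b i · ∑_{k ∈ ⟨i⟩} a k j`. -/
noncomputable def AFold {n : ℕ} (a : Fin n → Fin n → ℤ) (σ : Equiv.Perm (Fin n))
    (i j : Fin n) : ℤ :=
  bFold a σ i * ∑ k ∈ sigmaOrbit σ i, a k j

/-- `E i = ∑_{k ∈ ⟨i⟩} e k`. -/
noncomputable def EFold {n : ℕ} {L : Type*} [LieRing L]
    (σ : Equiv.Perm (Fin n)) (e : Fin n → L) (i : Fin n) : L :=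
  ∑ k ∈ sigmaOrbit σ i, e k

/-- `F i = b i • ∑_{k ∈ ⟨i⟩} f k`. -/
noncomputable def FFold {n : ℕ} {L : Type*} [LieRing L]
    (a : Fin n → Fin n → ℤ) (σ : Equiv.Perm (Fin n)) (f : Fin n → L) (i : Fin n) : L :=
  bFold a σ i • ∑ k ∈ sigmaOrbit σ i, f k

/-- `H i = b i • ∑_{k ∈ ⟨i⟩} h k`. -/
noncomputable def HFold {n : ℕ} {L : Type*} [LieRing L]
    (a : Fin n → Fin n → ℤ) (σ : Equiv.Perm (Fin n)) (h : Fin n → L) (i : Fin n) : L :=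
  bFold a σ i • ∑ k ∈ sigmaOrbit σ i, h k


lemma zpow_invar {n : ℕ} (a : Fin n → Fin n → ℤ) (σ : Equiv.Perm (Fin n))
    (hσ : ∀ i j, a (σ i) (σ j) = a i j) (m : ℤ) (x y : Fin n) :
    a ((σ ^ m) x) ((σ ^ m) y) = a x y := by
  have hnat : ∀ (p : ℕ) (x y : Fin n), a ((σ ^ p) x) ((σ ^ p) y) = a x y := by
    intro p
    induction p with
    | zero => intro x y; simp
    | succ p ih =>
      intro x y
      rw [pow_succ]
      simpa [Equiv.Perm.mul_apply, hσ] using ih (σ x) (σ y)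
  cases m with
  | ofNat p => simpa [zpow_natCast] using hnat p x y
  | negSucc p =>
      have h := hnat (p + 1) ((σ ^ (p + 1))⁻¹ x) ((σ ^ (p + 1))⁻¹ y)
      simp only [Equiv.Perm.coe_inv, Equiv.apply_symm_apply] at h
      simpa [zpow_negSucc] using h.symm

lemma my_lie_sum {L : Type*} [LieRing L] {ι : Type*} (x : L) (s : Finset ι) (g : ι → L) :
    ⁅x, ∑ k ∈ s, g k⁆ = ∑ k ∈ s, ⁅x, g k⁆ := by
  classical
  induction s using Finset.induction_on with
  | empty => simp
  | insert _ _ hmem ih => simp [Finset.sum_insert hmem, ih]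

lemma my_sum_lie {L : Type*} [LieRing L] {ι : Type*} (x : L) (s : Finset ι) (g : ι → L) :
    ⁅∑ k ∈ s, g k, x⁆ = ∑ k ∈ s, ⁅g k, x⁆ := by
  classical
  induction s using Finset.induction_on with
  | empty => simp
  | insert _ _ hmem ih => simp [Finset.sum_insert hmem, ih]

lemma orbit_sum_invar {n : ℕ} (a : Fin n → Fin n → ℤ) (σ : Equiv.Perm (Fin n))
    (hσ : ∀ i j, a (σ i) (σ j) = a i j) (i j l : Fin n) (hl : σ.SameCycle j l) :
    ∑ k ∈ sigmaOrbit σ i, a k l = ∑ k ∈ sigmaOrbit σ i, a k j := by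
  obtain ⟨m, hm⟩ := hl
  refine Finset.sum_equiv (σ ^ (-m) : Equiv.Perm (Fin n)) ?_ ?_
  · intro k
    simp only [sigmaOrbit, Finset.mem_filter, Finset.mem_univ, true_and]
    constructor
    · intro hk; exact hk.trans ⟨-m, rfl⟩
    · intro hk
      have : σ.SameCycle ((σ ^ (-m)) k) k := ⟨m, by rw [← Equiv.Perm.mul_apply, ← zpow_add, add_neg_cancel, zpow_zero, Equiv.Perm.one_apply]⟩
      exact hk.trans this
  · intro k _
    have h1 : a ((σ ^ (-m)) k) ((σ ^ (-m)) l) = a k l := zpow_invar a σ hσ (-m) k l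
    have h2 : (σ ^ (-m)) l = j := by
      rw [← hm]; simp [← Equiv.Perm.mul_apply, ← zpow_add]
    rw [h2] at h1
    exact h1.symm

theorem folded_H_E {K L : Type*} [Field K] [CharZero K] [LieRing L] [LieAlgebra K L]
    {n : ℕ} (hn : 1 ≤ n)
    (a : Fin n → Fin n → ℤ)
    (hdiag : ∀ i, a i i = 2)
    (hoff : ∀ i j, i ≠ j → a i j ≤ 0)
    (e f h : Fin n → L)
    (hhh : ∀ i j, ⁅h i, h j⁆ = 0)
    (hef : ∀ i, ⁅e i, f i⁆ = h i)
    (hef' : ∀ i j, i ≠ j → ⁅e i, f j⁆ = 0)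
    (hhe : ∀ i j, ⁅h i, e j⁆ = a i j • e j)
    (hhf : ∀ i j, ⁅h i, f j⁆ = (-(a i j)) • f j)
    (σ : Equiv.Perm (Fin n))
    (hσ : ∀ i j, a (σ i) (σ j) = a i j)
    (i j : Fin n) :
    ⁅HFold a σ h i, EFold σ e j⁆ = AFold a σ i j • EFold σ e j := by
  unfold HFold EFold AFold
  rw [smul_lie, my_sum_lie]
  have step : ∀ k, ⁅h k, ∑ l ∈ sigmaOrbit σ j, e l⁆ = ∑ l ∈ sigmaOrbit σ j, a k l • e l := by
    intro k
    rw [my_lie_sum]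
    exact Finset.sum_congr rfl fun l _ => hhe k l
  calc bFold a σ i • ∑ k ∈ sigmaOrbit σ i, ⁅h k, ∑ l ∈ sigmaOrbit σ j, e l⁆
      = bFold a σ i • ∑ k ∈ sigmaOrbit σ i, ∑ l ∈ sigmaOrbit σ j, a k l • e l := by
        rw [Finset.sum_congr rfl fun k _ => step k]
    _ = bFold a σ i • ∑ l ∈ sigmaOrbit σ j, (∑ k ∈ sigmaOrbit σ i, a k l) • e l := by
        rw [Finset.sum_comm]
        congr 1
        exact Finset.sum_congr rfl fun l _ => (Finset.sum_smul).symm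
    _ = bFold a σ i • ∑ l ∈ sigmaOrbit σ j, (∑ k ∈ sigmaOrbit σ i, a k j) • e l := by
        congr 1
        refine Finset.sum_congr rfl fun l hl => ?_
        rw [orbit_sum_invar a σ hσ i j l ?_]
        · simpa [sigmaOrbit] using hl
    _ = (bFold a σ i * ∑ k ∈ sigmaOrbit σ i, a k j) • ∑ l ∈ sigmaOrbit σ j, e l := by
        rw [← Finset.smul_sum, mul_smul]
end

section
/- For all indices i, j : Fin n: if j lies in the σ-orbit ⟨i⟩ of i then ⁅E i, F j⁆ = H i, and if j does not lie in ⟨i⟩ then ⁅E i, F j⁆ = 0. -/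
open scoped Classical

lemma mem_sigmaOrbit {n : ℕ} {σ : Equiv.Perm (Fin n)} {i k : Fin n} :
    k ∈ sigmaOrbit σ i ↔ σ.SameCycle i k := by
  simp [sigmaOrbit]

lemma sigmaOrbit_eq {n : ℕ} {σ : Equiv.Perm (Fin n)} {i j : Fin n}
    (hij : σ.SameCycle i j) : sigmaOrbit σ i = sigmaOrbit σ j := by
  ext k
  simp only [mem_sigmaOrbit]
  exact ⟨fun hk => hij.symm.trans hk, fun hk => hij.trans hk⟩

/-- Reindexing a sum over an orbit by σ. -/
lemma sum_sigmaOrbit_comp {n : ℕ} {M : Type*} [AddCommMonoid M] (σ : Equiv.Perm (Fin n))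
    (i : Fin n) (g : Fin n → M) :
    ∑ k ∈ sigmaOrbit σ i, g (σ k) = ∑ k ∈ sigmaOrbit σ i, g k := by
  refine Finset.sum_bijective σ σ.bijective (fun k => ?_) (fun k _ => rfl)
  simp [mem_sigmaOrbit, Equiv.Perm.sameCycle_apply_right]

lemma sum_a_step {n : ℕ} (a : Fin n → Fin n → ℤ) (σ : Equiv.Perm (Fin n))
    (hσ : ∀ i j, a (σ i) (σ j) = a i j) (i x : Fin n) :
    ∑ k ∈ sigmaOrbit σ i, a k (σ x) = ∑ k ∈ sigmaOrbit σ i, a k x := by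
  rw [← sum_sigmaOrbit_comp σ i (fun k => a k (σ x))]
  exact Finset.sum_congr rfl fun k _ => hσ k x

lemma sum_a_const {n : ℕ} (a : Fin n → Fin n → ℤ) (σ : Equiv.Perm (Fin n))
    (hσ : ∀ i j, a (σ i) (σ j) = a i j) (i j : Fin n) (hij : σ.SameCycle i j) :
    ∑ k ∈ sigmaOrbit σ i, a k j = ∑ k ∈ sigmaOrbit σ i, a k i := by
  obtain ⟨m, hm⟩ := hij
  subst hm
  induction m using Int.induction_on with
  | zero => simp
  | succ m ih =>
      have : ((σ ^ ((m : ℤ) + 1)) i) = σ ((σ ^ (m : ℤ)) i) := by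
        rw [add_comm, zpow_add, zpow_one, Equiv.Perm.mul_apply]
      rw [this, sum_a_step a σ hσ, ih]
  | pred m ih =>
      have h2 : σ * σ ^ (-(m:ℤ) - 1) = σ ^ (-(m:ℤ)) := by
        rw [← zpow_one_add]; norm_num
      have h1 : (σ ^ (-(m : ℤ))) i = σ ((σ ^ (-(m : ℤ) - 1)) i) := by
        rw [← h2, Equiv.Perm.mul_apply]
      rw [h1, sum_a_step a σ hσ] at ih
      exact ih

lemma lie_sum' {L : Type*} [LieRing L] {ι : Type*} (s : Finset ι) (x : L) (g : ι → L) :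
    ⁅x, ∑ k ∈ s, g k⁆ = ∑ k ∈ s, ⁅x, g k⁆ :=
  map_sum (AddMonoidHom.mk' (fun y => ⁅x, y⁆) (lie_add x)) g s

lemma sum_lie' {L : Type*} [LieRing L] {ι : Type*} (s : Finset ι) (x : L) (g : ι → L) :
    ⁅∑ k ∈ s, g k, x⁆ = ∑ k ∈ s, ⁅g k, x⁆ :=
  map_sum (AddMonoidHom.mk' (fun y => ⁅y, x⁆) (fun y z => add_lie y z x)) g s

lemma bFold_congr {n : ℕ} (a : Fin n → Fin n → ℤ) (σ : Equiv.Perm (Fin n))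
    (hσ : ∀ i j, a (σ i) (σ j) = a i j) {i j : Fin n} (hij : σ.SameCycle i j) :
    bFold a σ j = bFold a σ i := by
  unfold bFold
  rw [← sigmaOrbit_eq hij, sum_a_const a σ hσ i j hij]

theorem folded_E_F {K L : Type*} [Field K] [CharZero K] [LieRing L] [LieAlgebra K L]
    {n : ℕ} (hn : 1 ≤ n)
    (a : Fin n → Fin n → ℤ)
    (hdiag : ∀ i, a i i = 2)
    (hoff : ∀ i j, i ≠ j → a i j ≤ 0)
    (e f h : Fin n → L)
    (hhh : ∀ i j, ⁅h i, h j⁆ = 0)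
    (hef : ∀ i, ⁅e i, f i⁆ = h i)
    (hef' : ∀ i j, i ≠ j → ⁅e i, f j⁆ = 0)
    (hhe : ∀ i j, ⁅h i, e j⁆ = a i j • e j)
    (hhf : ∀ i j, ⁅h i, f j⁆ = (-(a i j)) • f j)
    (σ : Equiv.Perm (Fin n))
    (hσ : ∀ i j, a (σ i) (σ j) = a i j)
    (i j : Fin n) :
    (j ∈ sigmaOrbit σ i → ⁅EFold σ e i, FFold a σ f j⁆ = HFold a σ h i) ∧
    (j ∉ sigmaOrbit σ i → ⁅EFold σ e i, FFold a σ f j⁆ = 0) := by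
  have key : ⁅EFold σ e i, FFold a σ f j⁆ =
      bFold a σ j • ∑ k ∈ sigmaOrbit σ i,
        (if k ∈ sigmaOrbit σ j then h k else 0) := by
    unfold EFold FFold
    rw [lie_zsmul]
    congr 1
    rw [sum_lie']
    refine Finset.sum_congr rfl fun k _ => ?_
    rw [lie_sum']
    have hterm : ∀ l ∈ sigmaOrbit σ j, ⁅e k, f l⁆ = if l = k then h l else 0 := by
      intro l _
      split_ifs with hl
      · subst hl; exact hef l
      · exact hef' k l (fun hc => hl hc.symm)
    rw [Finset.sum_congr rfl hterm, Finset.sum_ite_eq' (sigmaOrbit σ j) k h]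
  constructor
  · intro hj
    have hij : σ.SameCycle i j := mem_sigmaOrbit.mp hj
    have horb : sigmaOrbit σ j = sigmaOrbit σ i := (sigmaOrbit_eq hij).symm
    rw [key, horb, bFold_congr a σ hσ hij]
    unfold HFold
    congr 1
    exact Finset.sum_congr rfl fun k hk => if_pos hk
  · intro hj
    have hij : ¬ σ.SameCycle i j := fun hc => hj (mem_sigmaOrbit.mpr hc)
    rw [key]
    have : ∀ k ∈ sigmaOrbit σ i, (if k ∈ sigmaOrbit σ j then h k else 0) = 0 := by
      intro k hk
      rw [if_neg]
      intro hk'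
      exact hij ((mem_sigmaOrbit.mp hk).trans (mem_sigmaOrbit.mp hk').symm)
    rw [Finset.sum_congr rfl this, Finset.sum_const_zero, smul_zero]
end

section
/- Suppose that b i = 1 (equivalently, a k i = 0 for every k ∈ ⟨i⟩ with k ≠ i) and that j ∉ ⟨i⟩ (so that A i j ≤ 0). Then (ad (E i))^{(1 − A i j).toNat} (E j) = 0, where ad x = ⁅x, ·⁆. -/
open scoped Classical

attribute [local instance 100] LieRing.ofAssociativeRing

/-- Proof-irrelevant congruence for `Multiset.noncommProd`. -/
private lemma noncommProd_congr' {M : Type*} [Monoid M] {s t : Multiset M} (h : s = t)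
    (c1 : {x | x ∈ s}.Pairwise Commute) :
    s.noncommProd c1 = t.noncommProd (h ▸ c1) := by subst h; rfl

/-- If `(X ^ c) v = 0` and `X` commutes with everything in `t`, then
`(X ^ c * t.noncommProd comm) v = 0`. -/
private lemma aux_pow_mul_apply {R M : Type*} [Semiring R] [AddCommMonoid M] [Module R M]
    (X : Module.End R M) (c : ℕ) (t : Multiset (Module.End R M)) (comm)
    (hXt : ∀ Y ∈ t, Commute X Y) (v : M) (hv : (X ^ c) v = 0) :
    (X ^ c * t.noncommProd comm) v = 0 := by
  rw [((Multiset.noncommProd_commute t comm X hXt).pow_left c).eq, Module.End.mul_apply, hv,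
    map_zero]

theorem folded_serre_E_of_b_eq_one {K L : Type*} [Field K] [CharZero K] [LieRing L] [LieAlgebra K L]
    {n : ℕ} (hn : 1 ≤ n)
    (a : Fin n → Fin n → ℤ)
    (hdiag : ∀ i, a i i = 2)
    (hoff : ∀ i j, i ≠ j → a i j ≤ 0)
    (e f h : Fin n → L)
    (hhh : ∀ i j, ⁅h i, h j⁆ = 0)
    (hef : ∀ i, ⁅e i, f i⁆ = h i)
    (hef' : ∀ i j, i ≠ j → ⁅e i, f j⁆ = 0)
    (hhe : ∀ i j, ⁅h i, e j⁆ = a i j • e j)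
    (hhf : ∀ i j, ⁅h i, f j⁆ = (-(a i j)) • f j)
    (σ : Equiv.Perm (Fin n))
    (hσ : ∀ i j, a (σ i) (σ j) = a i j)
    (hSerreE : ∀ i j, i ≠ j →
      ((LieAlgebra.ad K L (e i)) ^ (1 - a i j).toNat) (e j) = 0)
    (hSerreF : ∀ i j, i ≠ j →
      ((LieAlgebra.ad K L (f i)) ^ (1 - a i j).toNat) (f j) = 0)
    (i j : Fin n)
    (hb : bFold a σ i = 1)
    (hj : j ∉ sigmaOrbit σ i) :
    ((LieAlgebra.ad K L (EFold σ e i)) ^ (1 - AFold a σ i j).toNat) (EFold σ e j) = 0 := by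
  classical
  set S := sigmaOrbit σ i with hSdef
  have hmemS : ∀ k, k ∈ S ↔ σ.SameCycle i k := by
    intro k; simp [hSdef, sigmaOrbit]
  have hiS : i ∈ S := (hmemS i).mpr (Equiv.Perm.SameCycle.refl σ i)
  -- invariance of `a` under integer powers of `σ`
  have hσinv : ∀ x y, a (σ⁻¹ x) (σ⁻¹ y) = a x y := by
    intro x y
    conv_rhs => rw [← show σ (σ⁻¹ x) = x from Equiv.apply_symm_apply σ x,
      ← show σ (σ⁻¹ y) = y from Equiv.apply_symm_apply σ y, hσ]
  have key : ∀ (m : ℤ) (x y : Fin n), a ((σ ^ m) x) ((σ ^ m) y) = a x y := by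
    intro m
    induction m using Int.induction_on with
    | zero => simp
    | succ k ih =>
      intro x y
      have h1 : (σ : Equiv.Perm (Fin n)) ^ ((k : ℤ) + 1) = σ * σ ^ (k : ℤ) := by
        group
      rw [h1]
      simp only [Equiv.Perm.mul_apply]
      rw [hσ, ih]
    | pred k ih =>
      intro x y
      have h1 : (σ : Equiv.Perm (Fin n)) ^ (-(k : ℤ) - 1) = σ⁻¹ * σ ^ (-(k : ℤ)) := by
        group
      rw [h1]
      simp only [Equiv.Perm.mul_apply]
      rw [hσinv, ih]
  have hSclosed : ∀ (m : ℤ), ∀ k ∈ S, (σ ^ m) k ∈ S := by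
    intro m k hk
    rw [hmemS] at hk ⊢
    exact hk.trans ⟨m, rfl⟩
  -- orbit coefficients vanish off the diagonal
  have hak0 : ∀ k ∈ S, k ≠ i → a k i = 0 := by
    intro k hk hki
    have hsum2 : ∑ k ∈ S, a k i = 2 := by
      have hb' := hb; unfold bFold at hb'; rw [← hSdef] at hb'; linarith
    have h1 := Finset.add_sum_erase S (fun k => a k i) hiS
    have herase : ∑ k ∈ S.erase i, a k i = 0 := by
      simp only [hdiag i, hsum2] at h1; linarith
    have hnp : ∀ k ∈ S.erase i, a k i ≤ 0 := fun k hk =>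
      hoff k i (Finset.ne_of_mem_erase hk)
    exact (Finset.sum_eq_zero_iff_of_nonpos hnp).mp herase k (Finset.mem_erase.mpr ⟨hki, hk⟩)
  have haS : ∀ k ∈ S, ∀ l ∈ S, k ≠ l → a k l = 0 := by
    intro k hk l hl hkl
    obtain ⟨m, hm⟩ := (hmemS l).mp hl
    have hfix : (σ ^ m) ((σ ^ (-m)) k) = k := by
      rw [zpow_neg]; exact Equiv.apply_symm_apply _ k
    have hk' : (σ ^ (-m)) k ∈ S := hSclosed (-m) k hk
    have hki : (σ ^ (-m)) k ≠ i := by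
      intro hcon
      apply hkl
      rw [← hfix, hcon, hm]
    have h2 := key m ((σ ^ (-m)) k) i
    rw [hfix, hm] at h2
    rw [h2]
    exact hak0 _ hk' hki
  -- the `e k`, `k ∈ S`, pairwise commute
  have hee : ∀ k ∈ S, ∀ l ∈ S, k ≠ l → ⁅e k, e l⁆ = 0 := by
    intro k hk l hl hkl
    have hs := hSerreE k l hkl
    rw [haS k hk l hl hkl] at hs
    simpa [LieAlgebra.ad_apply] using hs
  have hadcomm : ∀ k ∈ S, ∀ l ∈ S,
      Commute (LieAlgebra.ad K L (e k)) (LieAlgebra.ad K L (e l)) := by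
    intro k hk l hl
    rcases eq_or_ne k l with rfl | hkl
    · exact Commute.refl _
    · have h0 : ⁅LieAlgebra.ad K L (e k), LieAlgebra.ad K L (e l)⁆ = 0 := by
        rw [← LieHom.map_lie, hee k hk l hl hkl, map_zero]
      rw [Ring.lie_def] at h0
      exact sub_eq_zero.mp h0
  have hc : (↑S : Set (Fin n)).Pairwise (Function.onFun Commute
      fun k => LieAlgebra.ad K L (e k)) := by
    intro k hk l hl _
    exact hadcomm k hk l hl
  -- the core vanishing statement
  have core : ∀ l, l ∉ S →
      ((LieAlgebra.ad K L (EFold σ e i)) ^ (1 - ∑ k ∈ S, a k l).toNat) (e l) = 0 := by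
    intro l hlS
    have hne : ∀ k ∈ S, k ≠ l := fun k hk hkl => hlS (hkl ▸ hk)
    have hneg : ∀ k ∈ S, a k l ≤ 0 := fun k hk => hoff k l (hne k hk)
    set N := (1 - ∑ k ∈ S, a k l).toNat with hN
    have hadE : LieAlgebra.ad K L (EFold σ e i) = ∑ k ∈ S, LieAlgebra.ad K L (e k) := by
      rw [show EFold σ e i = ∑ k ∈ S, e k from by rw [hSdef]; rfl]
      exact map_sum (LieAlgebra.ad K L).toLinearMap e S
    rw [hadE, Finset.sum_pow_of_commute _ S hc N]
    simp only [LinearMap.sum_apply, Module.End.mul_apply]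
    apply Finset.sum_eq_zero
    intro m _
    have hmem : ∀ k ∈ m.1.1, k ∈ S := by
      intro k hk
      exact Finset.mem_sym_iff.mp m.2 k hk
    -- pigeonhole
    obtain ⟨k0, hk0S, hk0c⟩ : ∃ k0 ∈ S, (1 - a k0 l).toNat ≤ Multiset.count k0 m.1.1 := by
      by_contra hno
      push_neg at hno
      have hcount_le : ∀ k ∈ S, (Multiset.count k m.1.1 : ℤ) ≤ -a k l := by
        intro k hk
        have h2 : (Multiset.count k m.1.1 : ℤ) < 1 - a k l := by
          have h3 := hno k hk
          exact Int.lt_toNat.mp h3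
        omega
      have hNcard : ∑ k ∈ S, Multiset.count k m.1.1 = N := by
        have hsub : m.1.1.toFinset ⊆ S := fun k hk => hmem k (Multiset.mem_toFinset.mp hk)
        have hzero : ∀ k ∈ S, k ∉ m.1.1.toFinset → Multiset.count k m.1.1 = 0 := by
          intro k _ hk
          exact Multiset.count_eq_zero.mpr (fun hmemk => hk (Multiset.mem_toFinset.mpr hmemk))
        rw [← Finset.sum_subset hsub hzero, Multiset.toFinset_sum_count_eq, m.1.2]
      have h4 : (N : ℤ) ≤ -∑ k ∈ S, a k l := by
        rw [← hNcard]
        push_cast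
        rw [← Finset.sum_neg_distrib]
        exact Finset.sum_le_sum hcount_le
      have h5 : (N : ℤ) = 1 - ∑ k ∈ S, a k l := by
        rw [hN, Int.toNat_of_nonneg]
        have := Finset.sum_nonpos hneg
        linarith
      linarith
    set c := Multiset.count k0 m.1.1 with hcdef
    obtain ⟨r, hr⟩ : ∃ r, m.1.1 = Multiset.replicate c k0 + r :=
      Multiset.le_iff_exists_add.mp (Multiset.le_count_iff_replicate_le.mp le_rfl)
    have hmap : Multiset.map (fun k => LieAlgebra.ad K L (e k)) m.1.1
        = Multiset.replicate c (LieAlgebra.ad K L (e k0))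
          + Multiset.map (fun k => LieAlgebra.ad K L (e k)) r := by
      rw [hr, Multiset.map_add, Multiset.map_replicate]
    rw [noncommProd_congr' hmap, Multiset.noncommProd_add,
      Multiset.noncommProd_eq_pow_card _ _ (LieAlgebra.ad K L (e k0))
        (fun x hx => Multiset.eq_of_mem_replicate hx),
      Multiset.card_replicate]
    rw [aux_pow_mul_apply _ c _ _ ?_ (e l) ?_, map_zero]
    · rintro Y hY
      obtain ⟨k', hk', rfl⟩ := Multiset.mem_map.mp hY
      have hk'S : k' ∈ S := hmem k' (by rw [hr]; exact Multiset.mem_add.mpr (Or.inr hk'))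
      exact hadcomm k0 hk0S k' hk'S
    · obtain ⟨d, hd⟩ : ∃ d, c = d + (1 - a k0 l).toNat := ⟨c - (1 - a k0 l).toNat, by omega⟩
      rw [hd, pow_add, Module.End.mul_apply, hSerreE k0 l (hne k0 hk0S), map_zero]
  -- conclude
  have hAval : (1 - AFold a σ i j).toNat = (1 - ∑ k ∈ S, a k j).toNat := by
    unfold AFold
    rw [← hSdef, hb, one_mul]
  rw [hAval, show EFold σ e j = ∑ l ∈ sigmaOrbit σ j, e l from rfl, map_sum]
  apply Finset.sum_eq_zero
  intro l hl
  have hjl : σ.SameCycle j l := by simpa [sigmaOrbit] using hl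
  have hlS : l ∉ S := by
    intro hlS
    apply hj
    rw [hmemS] at hlS
    exact (hmemS j).mpr (hlS.trans hjl.symm)
  obtain ⟨m, hm⟩ := hjl
  have hsuml : ∑ k ∈ S, a k j = ∑ k ∈ S, a k l := by
    apply Finset.sum_nbij' (fun k => (σ ^ m) k) (fun k => (σ ^ (-m)) k)
    · exact fun k hk => hSclosed m k hk
    · exact fun k hk => hSclosed (-m) k hk
    · intro k _
      rw [zpow_neg]; exact Equiv.symm_apply_apply _ k
    · intro k _
      rw [zpow_neg]; exact Equiv.apply_symm_apply _ k
    · intro k _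
      have h2 := key m k j
      rw [hm] at h2
      exact h2.symm
  rw [hsuml]
  exact core l hlS
end

section
/- Suppose that b i = 1 (equivalently, a k i = 0 for every k ∈ ⟨i⟩ with k ≠ i) and that j ∉ ⟨i⟩ (so that A i j ≤ 0). Then (ad (F i))^{(1 − A i j).toNat} (F j) = 0, where ad x = ⁅x, ·⁆. -/
open scoped Classical

lemma aux_pow_sum {R M ι : Type*} [DecidableEq ι] [CommRing R] [AddCommGroup M] [Module R M]
    (S : Finset ι) (T : ι → Module.End R M)
    (hcomm : ∀ k ∈ S, ∀ k' ∈ S, Commute (T k) (T k')) :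
    ∀ (m : ℕ) (c : ι → ℕ) (v : M), (∀ k ∈ S, ((T k) ^ (c k)) v = 0) →
      (∑ k ∈ S, c k) + 1 ≤ m + S.card → ((∑ k ∈ S, T k) ^ m) v = 0 := by
  intro m
  induction m with
  | zero =>
    intro c v hkill hle
    obtain ⟨k, hk, hck⟩ : ∃ k ∈ S, c k = 0 := by
      by_contra hc
      push_neg at hc
      have : S.card ≤ ∑ k ∈ S, c k := by
        rw [Finset.card_eq_sum_ones]
        exact Finset.sum_le_sum fun k hk => Nat.one_le_iff_ne_zero.2 (hc k hk)
      omega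
    have hv : v = 0 := by simpa [hck] using hkill k hk
    simp [hv]
  | succ m ih =>
    intro c v hkill hle
    by_cases h0 : ∃ k ∈ S, c k = 0
    · obtain ⟨k, hk, hck⟩ := h0
      have hv : v = 0 := by simpa [hck] using hkill k hk
      simp [hv]
    · push_neg at h0
      have step : ((∑ k ∈ S, T k) ^ (m + 1)) v
          = ∑ k ∈ S, ((∑ k' ∈ S, T k') ^ m) ((T k) v) := by
        rw [pow_succ, Module.End.mul_apply, LinearMap.sum_apply, map_sum]
      rw [step]
      refine Finset.sum_eq_zero fun k hk => ?_
      have hck : 1 ≤ c k := Nat.one_le_iff_ne_zero.2 (h0 k hk)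
      refine ih (Function.update c k (c k - 1)) (T k v) ?_ ?_
      · intro k' hk'
        by_cases hkk : k' = k
        · subst hkk
          rw [Function.update_self]
          have : ((T k') ^ (c k' - 1)) ((T k') v) = ((T k') ^ (c k')) v := by
            rw [← Module.End.mul_apply, ← pow_succ, Nat.sub_add_cancel hck]
          rw [this]
          exact hkill k' hk'
        · rw [Function.update_of_ne hkk]
          have hc : Commute ((T k') ^ (c k')) (T k) := (hcomm k' hk' k hk).pow_left _
          calc ((T k') ^ c k') ((T k) v) = (((T k') ^ c k') * (T k)) v := rfl
            _ = ((T k) * ((T k') ^ c k')) v := by rw [hc.eq]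
            _ = (T k) (((T k') ^ c k') v) := rfl
            _ = 0 := by rw [hkill k' hk', map_zero]
      · have hsum : ∑ k' ∈ S, Function.update c k (c k - 1) k'
            = (∑ k' ∈ S, c k') - 1 := by
          rw [Finset.sum_update_of_mem hk, Finset.sdiff_singleton_eq_erase]
          have := Finset.sum_erase_add S c hk
          omega
        rw [hsum]
        have h1 : 1 ≤ ∑ k' ∈ S, c k' :=
          le_trans hck (Finset.single_le_sum (fun _ _ => Nat.zero_le _) hk)
        omega

attribute [local instance 100] LieRing.ofAssociativeRing

theorem folded_serre_F_of_b_eq_one {K L : Type*} [Field K] [CharZero K] [LieRing L] [LieAlgebra K L]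
    {n : ℕ} (hn : 1 ≤ n)
    (a : Fin n → Fin n → ℤ)
    (hdiag : ∀ i, a i i = 2)
    (hoff : ∀ i j, i ≠ j → a i j ≤ 0)
    (e f h : Fin n → L)
    (hhh : ∀ i j, ⁅h i, h j⁆ = 0)
    (hef : ∀ i, ⁅e i, f i⁆ = h i)
    (hef' : ∀ i j, i ≠ j → ⁅e i, f j⁆ = 0)
    (hhe : ∀ i j, ⁅h i, e j⁆ = a i j • e j)
    (hhf : ∀ i j, ⁅h i, f j⁆ = (-(a i j)) • f j)
    (σ : Equiv.Perm (Fin n))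
    (hσ : ∀ i j, a (σ i) (σ j) = a i j)
    (hSerreE : ∀ i j, i ≠ j →
      ((LieAlgebra.ad K L (e i)) ^ (1 - a i j).toNat) (e j) = 0)
    (hSerreF : ∀ i j, i ≠ j →
      ((LieAlgebra.ad K L (f i)) ^ (1 - a i j).toNat) (f j) = 0)
    (i j : Fin n)
    (hb : bFold a σ i = 1)
    (hj : j ∉ sigmaOrbit σ i) :
    ((LieAlgebra.ad K L (FFold a σ f i)) ^ (1 - AFold a σ i j).toNat) (FFold a σ f j) = 0 := by
  classical
  set S := sigmaOrbit σ i with hS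
  have hmemS : ∀ k, k ∈ S ↔ σ.SameCycle i k := by
    intro k; simp [hS, sigmaOrbit]
  have hiS : i ∈ S := (hmemS i).2 (Equiv.Perm.SameCycle.refl σ i)
  -- invariance of a under powers of σ
  have hnat : ∀ (m : ℕ) (x y : Fin n), a ((σ ^ m) x) ((σ ^ m) y) = a x y := by
    intro m
    induction m with
    | zero => simp
    | succ m ih =>
      intro x y
      rw [pow_succ σ m]
      simp only [Equiv.Perm.mul_apply]
      rw [ih (σ x) (σ y), hσ]
  have hzpow : ∀ (m : ℤ) (x y : Fin n), a ((σ ^ m) x) ((σ ^ m) y) = a x y := by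
    have hinv : ∀ (τ : Equiv.Perm (Fin n)), (∀ x y, a (τ x) (τ y) = a x y) →
        ∀ x y, a (τ⁻¹ x) (τ⁻¹ y) = a x y := by
      intro τ hτ x y
      rw [← hτ (τ⁻¹ x) (τ⁻¹ y), Equiv.Perm.coe_inv, Equiv.apply_symm_apply, Equiv.apply_symm_apply]
    intro m x y
    cases m with
    | ofNat p => simpa [zpow_natCast] using hnat p x y
    | negSucc p => simpa [zpow_negSucc] using hinv (σ ^ (p + 1)) (hnat (p + 1)) x y
  -- orbit closed under zpow
  have hclosed : ∀ (m : ℤ) (k : Fin n), k ∈ S → (σ ^ m) k ∈ S := by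
    intro m k hk
    rw [hmemS] at hk ⊢
    exact Equiv.Perm.sameCycle_zpow_right.2 hk
  -- a k i = 0 for k in S, k ≠ i
  have hzero_i : ∀ k ∈ S, k ≠ i → a k i = 0 := by
    intro k hk hki
    have hsum2 : ∑ k ∈ S, a k i = 2 := by
      have hb' := hb
      unfold bFold at hb'
      rw [← hS] at hb'
      omega
    have herase : ∑ k ∈ S.erase i, a k i = 0 := by
      have h2 : a i i + ∑ x ∈ S.erase i, a x i = ∑ x ∈ S, a x i :=
        Finset.add_sum_erase S (fun k => a k i) hiS
      rw [hdiag i] at h2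
      omega
    have hnonpos : ∀ k ∈ S.erase i, a k i ≤ 0 := fun k hk =>
      hoff _ _ (Finset.ne_of_mem_erase hk)
    exact (Finset.sum_eq_zero_iff_of_nonpos hnonpos).1 herase k (Finset.mem_erase.2 ⟨hki, hk⟩)
  -- a k k' = 0 for distinct k, k' in S
  have hzeroS : ∀ k ∈ S, ∀ k' ∈ S, k ≠ k' → a k k' = 0 := by
    intro k hk k' hk' hkk
    obtain ⟨m, hm⟩ : σ.SameCycle i k' := (hmemS k').1 hk'
    have h1 : a k k' = a ((σ ^ (-m)) k) ((σ ^ (-m)) k') := (hzpow (-m) k k').symm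
    have h2 : (σ ^ (-m)) k' = i := by
      rw [← hm, ← Equiv.Perm.mul_apply, ← zpow_add, neg_add_cancel, zpow_zero,
        Equiv.Perm.coe_one, id_eq]
    rw [h1, h2]
    refine hzero_i _ (hclosed (-m) k hk) fun hcon => hkk ?_
    have h3 := congrArg (σ ^ m) hcon
    rw [← Equiv.Perm.mul_apply, ← zpow_add, add_neg_cancel, zpow_zero,
      Equiv.Perm.coe_one, id_eq, hm] at h3
    exact h3
  -- f's on the orbit of i commute
  have hff : ∀ k ∈ S, ∀ k' ∈ S, ⁅f k, f k'⁆ = 0 := by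
    intro k hk k' hk'
    by_cases hkk : k = k'
    · subst hkk; exact lie_self _
    · have hser := hSerreF k k' hkk
      rw [hzeroS k hk k' hk' hkk] at hser
      norm_num [LieAlgebra.ad_apply] at hser
      exact hser
  have hcomm : ∀ k ∈ S, ∀ k' ∈ S,
      Commute (LieAlgebra.ad K L (f k)) (LieAlgebra.ad K L (f k')) := by
    intro k hk k' hk'
    have h1 : ⁅LieAlgebra.ad K L (f k), LieAlgebra.ad K L (f k')⁆ = 0 := by
      rw [← LieHom.map_lie, hff k hk k' hk', map_zero]
    rw [Ring.lie_def] at h1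
    exact sub_eq_zero.1 h1
  -- orbits of i and j are disjoint
  have hnotin : ∀ l ∈ sigmaOrbit σ j, l ∉ S := by
    intro l hl hlS
    apply hj
    have h1 : σ.SameCycle j l := by simpa [sigmaOrbit] using hl
    have h2 : σ.SameCycle i l := (hmemS l).1 hlS
    exact (hmemS j).2 (h2.trans h1.symm)
  -- column sums over S agree along the orbit of j
  have hmemiff : ∀ (m : ℤ) (k : Fin n), k ∈ S ↔ (σ ^ m) k ∈ S := by
    intro m k
    constructor
    · exact hclosed m k
    · intro hk
      have := hclosed (-m) _ hk
      rwa [← Equiv.Perm.mul_apply, ← zpow_add, neg_add_cancel, zpow_zero,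
        Equiv.Perm.coe_one, id_eq] at this
  have hsuml : ∀ l ∈ sigmaOrbit σ j, ∑ k ∈ S, a k l = ∑ k ∈ S, a k j := by
    intro l hl
    obtain ⟨m, hm⟩ : σ.SameCycle j l := by simpa [sigmaOrbit] using hl
    rw [← hm]
    have hcongr : ∀ k ∈ S, a k ((σ ^ m) j) = a ((σ ^ (-m)) k) j := by
      intro k hk
      have := hzpow (-m) k ((σ ^ m) j)
      rw [← Equiv.Perm.mul_apply, ← zpow_add, neg_add_cancel, zpow_zero,
        Equiv.Perm.coe_one, id_eq] at this
      exact this.symm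
    rw [Finset.sum_congr rfl hcongr]
    exact Finset.sum_equiv (σ ^ (-m) : Equiv.Perm (Fin n))
      (fun k => hmemiff (-m) k) (fun k _ => rfl)
  -- the folded Cartan entry
  have hAj : AFold a σ i j = ∑ k ∈ S, a k j := by
    unfold AFold
    rw [← hS, hb, one_mul]
  have hAle : AFold a σ i j ≤ 0 := by
    rw [hAj]
    refine Finset.sum_nonpos fun k hk => hoff k j fun hc => ?_
    exact hj (hc ▸ (hS ▸ hk))
  -- main computation
  have hmain : ∀ l ∈ sigmaOrbit σ j,
      ((∑ k ∈ S, LieAlgebra.ad K L (f k)) ^ (1 - AFold a σ i j).toNat) (f l) = 0 := by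
    intro l hl
    have hne : ∀ k ∈ S, k ≠ l := fun k hk hc => hnotin l hl (hc ▸ hk)
    have hkl : ∀ k ∈ S, a k l ≤ 0 := fun k hk => hoff k l (hne k hk)
    have hcast : ((∑ k ∈ S, (1 - a k l).toNat : ℕ) : ℤ)
        = (S.card : ℤ) - AFold a σ i j := by
      push_cast
      rw [Finset.sum_congr rfl fun k hk => Int.toNat_of_nonneg (by linarith [hkl k hk])]
      rw [Finset.sum_sub_distrib, Finset.sum_const, hsuml l hl, ← hAj]
      simp [nsmul_eq_mul]
    have hle : (∑ k ∈ S, (1 - a k l).toNat) + 1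
        ≤ (1 - AFold a σ i j).toNat + S.card := by omega
    exact aux_pow_sum S _ hcomm _ (fun k => (1 - a k l).toNat) _
      (fun k hk => hSerreF k l (hne k hk)) hle
  -- assemble
  have hFi : FFold a σ f i = ∑ k ∈ S, f k := by
    unfold FFold
    rw [← hS, hb, one_smul]
  have hadsum := map_sum
    (((LieAlgebra.ad K L : L →ₗ⁅K⁆ Module.End K L) : L →ₗ[K] Module.End K L)) f S
  rw [LieHom.coe_toLinearMap] at hadsum
  rw [hFi, hadsum]
  show ((∑ k ∈ S, LieAlgebra.ad K L (f k)) ^ (1 - AFold a σ i j).toNat)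
      (bFold a σ j • ∑ l ∈ sigmaOrbit σ j, f l) = 0
  rw [map_zsmul, map_sum, Finset.sum_eq_zero hmain, smul_zero]
end

section
/- If moreover p : ℕ satisfies X^{p+1} v = 0, then (X + Y)^{2p+1} v = 0. -/
theorem conj_pq_case_q_zero {K V : Type*} [Field K] [CharZero K] [AddCommGroup V] [Module K V]
    (X Y Z : Module.End K V)
    (hZ : Z = X * Y - Y * X)
    (hXZ : X * Z = Z * X)
    (hYZ : Y * Z = Z * Y)
    (v : V) (hYv : Y v = 0)
    (p : ℕ) (hXv : (X ^ (p + 1)) v = 0) :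
    ((X + Y) ^ (2 * p + 1)) v = 0 := by
  have hYX : Y * X = X * Y - Z := by rw [hZ]; noncomm_ring
  have cXZ : Commute X Z := hXZ
  have cYZ : Commute Y Z := hYZ
  -- key commutation: Y * X^(a+1) = X^(a+1)*Y - (a+1) • (X^a * Z)
  have key : ∀ a : ℕ, Y * X ^ (a+1) = X ^ (a+1) * Y - (a+1) • (X ^ a * Z) := by
    intro a
    induction a with
    | zero => simpa using hYX
    | succ n ih =>
      have h1 : Y * X ^ (n+2) = (Y * X ^ (n+1)) * X := by rw [mul_assoc, ← pow_succ]
      rw [h1, ih, sub_mul, mul_assoc, hYX, smul_mul_assoc, mul_assoc, ← hXZ,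
        ← mul_assoc (X ^ n), ← pow_succ, mul_sub, ← mul_assoc, ← pow_succ,
        succ_nsmul (X ^ (n+1) * Z) (n+1)]
      abel
  -- main: X^(p+1-k) Z^k v = 0
  have main : ∀ k, k ≤ p + 1 → (X ^ (p+1-k) * Z ^ k) v = 0 := by
    intro k hk
    induction k with
    | zero => simpa using hXv
    | succ n ih =>
      have hn : n ≤ p := by omega
      have ih' := ih (by omega)
      have hpn : p + 1 - n = (p - n) + 1 := by omega
      have h0 : Y ((X ^ (p+1-n) * Z ^ n) v) = 0 := by rw [ih', map_zero]
      rw [← Module.End.mul_apply, ← mul_assoc, hpn, key (p - n)] at h0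
      rw [sub_mul, smul_mul_assoc, mul_assoc (X ^ (p-n+1)), (cYZ.pow_right n).eq,
        ← mul_assoc] at h0
      have h2 : (X ^ (p-n+1) * Z ^ n * Y) v = 0 := by
        rw [Module.End.mul_apply, hYv, map_zero]
      rw [LinearMap.sub_apply, h2, LinearMap.smul_apply, zero_sub, neg_eq_zero,
        mul_assoc, ← pow_succ'] at h0
      rw [← Nat.cast_smul_eq_nsmul K] at h0
      have hne : ((p - n + 1 : ℕ) : K) ≠ 0 := Nat.cast_ne_zero.mpr (by omega)
      have h3 := (smul_eq_zero.mp h0).resolve_left hne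
      have hidx : p + 1 - (n + 1) = p - n := by omega
      rw [hidx]
      exact h3
  set S : ℕ → Set V := fun n => {w | ∃ a b : ℕ, a + 2 * b = n ∧ w = (X ^ a * Z ^ b) v} with hS
  have span_mem : ∀ n, ((X + Y) ^ n) v ∈ Submodule.span K (S n) := by
    intro n
    induction n with
    | zero =>
      apply Submodule.subset_span
      exact ⟨0, 0, by simp, by simp⟩
    | succ n ih =>
      rw [pow_succ', Module.End.mul_apply]
      have hmap : (X + Y) (((X + Y) ^ n) v)
          ∈ Submodule.map (X + Y) (Submodule.span K (S n)) := Submodule.mem_map_of_mem ih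
      rw [Submodule.map_span] at hmap
      refine Submodule.span_le.mpr ?_ hmap
      rintro w ⟨u, ⟨a, b, hab, rfl⟩, rfl⟩
      rw [LinearMap.add_apply]
      apply Submodule.add_mem
      · apply Submodule.subset_span
        refine ⟨a + 1, b, by omega, ?_⟩
        rw [← Module.End.mul_apply, ← mul_assoc, ← pow_succ']
      · cases a with
        | zero =>
          have hz : Y ((X ^ 0 * Z ^ b) v) = 0 := by
            rw [← Module.End.mul_apply, pow_zero, one_mul, (cYZ.pow_right b).eq,
              Module.End.mul_apply, hYv, map_zero]
          rw [hz]
          exact Submodule.zero_mem _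
        | succ a =>
          have hz : Y ((X ^ (a + 1) * Z ^ b) v) = -((a + 1) • ((X ^ a * Z ^ (b + 1)) v)) := by
            rw [← Module.End.mul_apply, ← mul_assoc, key a, sub_mul, mul_assoc,
              (cYZ.pow_right b).eq, ← mul_assoc, smul_mul_assoc, mul_assoc (X ^ a),
              ← pow_succ', LinearMap.sub_apply, LinearMap.smul_apply,
              Module.End.mul_apply, hYv, map_zero, zero_sub]
          rw [hz]
          refine Submodule.neg_mem _ (nsmul_mem ?_ _)
          exact Submodule.subset_span ⟨a, b + 1, by omega, rfl⟩
  have hfin := span_mem (2 * p + 1)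
  have hsub : S (2 * p + 1) ⊆ {(0 : V)} := by
    rintro w ⟨a, b, hab, rfl⟩
    have ha : a = (p - b) + (p + 1 - b) := by omega
    rw [Set.mem_singleton_iff, ha, pow_add, mul_assoc, Module.End.mul_apply,
      main b (by omega), map_zero]
  have hle : Submodule.span K (S (2 * p + 1)) ≤ ⊥ :=
    Submodule.span_le.mpr (by simpa using hsub)
  exact Submodule.mem_bot K |>.mp (hle hfin)
end

section
/- Then (X + Y)^5 v = 0. -/
theorem conj_pq_case_p_q_one {K V : Type*} [Field K] [CharZero K] [AddCommGroup V] [Module K V]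
    (X Y Z : Module.End K V)
    (hZ : Z = X * Y - Y * X)
    (hXZ : X * Z = Z * X)
    (hYZ : Y * Z = Z * Y)
    (v : V) (hXv : X (X v) = 0) (hYv : Y (Y v) = 0) :
    ((X + Y) ^ 5) v = 0 := by
  -- pointwise commutation lemmas
  have hXZ' : ∀ w : V, X (Z w) = Z (X w) := fun w => by
    have h := DFunLike.congr_fun hXZ w
    simpa [Module.End.mul_apply] using h
  have hYZ' : ∀ w : V, Y (Z w) = Z (Y w) := fun w => by
    have h := DFunLike.congr_fun hYZ w
    simpa [Module.End.mul_apply] using h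
  have hZw : ∀ w : V, Z w = X (Y w) - Y (X w) := fun w => by
    have h := DFunLike.congr_fun hZ w
    simpa [Module.End.mul_apply, LinearMap.sub_apply] using h
  have hswap : ∀ w : V, Y (X w) = X (Y w) - Z w := fun w => by
    rw [hZw w]; abel
  have hswap' : ∀ w : V, X (Y w) = Y (X w) + Z w := fun w => by
    rw [hZw w]; abel
  -- cancellation helpers (char 0)
  have cancel2 : ∀ w : V, w + w = 0 → w = 0 := by
    intro w hw
    have h3 : (2 : K) • w = 0 := by
      rw [show (2 : K) = (1 : K) + 1 by norm_num, add_smul, one_smul, hw]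
    exact (smul_eq_zero.mp h3).resolve_left (by norm_num)
  have cancel3 : ∀ w : V, w + w + w = 0 → w = 0 := by
    intro w hw
    have h3 : (3 : K) • w = 0 := by
      rw [show (3 : K) = (1 : K) + 1 + 1 by norm_num, add_smul, add_smul, one_smul]
      rw [show (w + w + w = 0) from hw]  -- reassociation might be needed
    exact (smul_eq_zero.mp h3).resolve_left (by norm_num)
  -- basic computations
  have hXYX : X (Y (X v)) = Z (X v) := by
    rw [hswap' (X v), hXv, map_zero, zero_add]
  have hYXY : Y (X (Y v)) = -Z (Y v) := by
    rw [hswap (Y v), hYv, map_zero, zero_sub]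
  have hXXY : X (X (Y v)) = Z (X v) + Z (X v) := by
    rw [hswap' v, map_add, hXYX, hXZ' v]
  have hYYX : Y (Y (X v)) = -(Z (Y v) + Z (Y v)) := by
    rw [hswap v, map_sub, hYXY, hYZ' v]
    abel
  -- key relation: Z (X (Y v)) + Z (Y (X v)) = 0
  have hA : Z (X (Y v)) + Z (Y (X v)) = 0 := by
    have h0 : Y (Y (X (X v))) = 0 := by rw [hXv, map_zero, map_zero]
    have h3 : Y (Y (X (X v)))
        = -((Z (X (Y v)) + Z (Y (X v))) + (Z (X (Y v)) + Z (Y (X v)))) := by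
      rw [hswap (X v), map_sub, hswap (Y (X v)), hYYX, hYZ' (X v), map_neg, map_add,
        hXZ' (Y v)]
      abel
    apply cancel2
    rw [← neg_neg ((Z (X (Y v)) + Z (Y (X v))) + (Z (X (Y v)) + Z (Y (X v)))), ← h3, h0,
      neg_zero]
  have hd : Z (Y (X v)) = -Z (X (Y v)) := by
    have h := hA
    rw [add_comm] at h
    exact eq_neg_of_add_eq_zero_left h
  have hZZv : Z (Z v) = Z (X (Y v)) - Z (Y (X v)) := by rw [hZw v, map_sub]
  -- Z (Z (X v)) = 0
  have hTz : Z (Z (X v)) = 0 := by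
    apply cancel3
    have hT : Z (Z (X v)) = -(Z (Z (X v)) + Z (Z (X v))) := by
      calc Z (Z (X v)) = Z (X (Z v)) := by rw [hXZ' v]
        _ = X (Z (Z v)) := (hXZ' (Z v)).symm
        _ = X (-(Z (Y (X v)) + Z (Y (X v)))) := by
              rw [hZZv, hd]
              rw [show Z (X (Y v)) - -Z (X (Y v)) = -(-Z (X (Y v)) + -Z (X (Y v))) by abel]
        _ = -(X (Z (Y (X v))) + X (Z (Y (X v)))) := by rw [map_neg, map_add]
        _ = -(Z (Z (X v)) + Z (Z (X v))) := by rw [hXZ' (Y (X v)), hXYX]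
    calc Z (Z (X v)) + Z (Z (X v)) + Z (Z (X v))
        = Z (Z (X v)) + (Z (Z (X v)) + Z (Z (X v))) := by abel
      _ = -(Z (Z (X v)) + Z (Z (X v))) + (Z (Z (X v)) + Z (Z (X v))) := by rw [← hT]
      _ = 0 := by abel
  -- Z (Z (Y v)) = 0
  have hUz : Z (Z (Y v)) = 0 := by
    apply cancel3
    have hU : Z (Z (Y v)) = -(Z (Z (Y v)) + Z (Z (Y v))) := by
      calc Z (Z (Y v)) = Z (Y (Z v)) := by rw [hYZ' v]
        _ = Y (Z (Z v)) := (hYZ' (Z v)).symm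
        _ = Y (Z (X (Y v)) + Z (X (Y v))) := by
              rw [hZZv, hd]
              rw [show Z (X (Y v)) - -Z (X (Y v)) = Z (X (Y v)) + Z (X (Y v)) by abel]
        _ = Y (Z (X (Y v))) + Y (Z (X (Y v))) := by rw [map_add]
        _ = Z (Y (X (Y v))) + Z (Y (X (Y v))) := by rw [hYZ' (X (Y v))]
        _ = -(Z (Z (Y v)) + Z (Z (Y v))) := by rw [hYXY, map_neg]; abel
    calc Z (Z (Y v)) + Z (Z (Y v)) + Z (Z (Y v))
        = Z (Z (Y v)) + (Z (Z (Y v)) + Z (Z (Y v))) := by abel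
      _ = -(Z (Z (Y v)) + Z (Z (Y v))) + (Z (Z (Y v)) + Z (Z (Y v))) := by rw [← hU]
      _ = 0 := by abel
  -- now expand (X+Y)^5 v step by step
  have e : ((X + Y) ^ 5) v = (X + Y) ((X + Y) ((X + Y) ((X + Y) ((X + Y) v)))) := by
    simp [pow_succ, Module.End.mul_apply]
  have s1 : (X + Y) v = X v + Y v := by simp [LinearMap.add_apply]
  have s2 : (X + Y) (X v + Y v) = X (Y v) + Y (X v) := by
    simp only [LinearMap.add_apply, map_add, hXv, hYv, zero_add, add_zero]
    abel
  have s3 : (X + Y) (X (Y v) + Y (X v))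
      = (Z (X v) + Z (X v) + Z (X v)) - (Z (Y v) + Z (Y v) + Z (Y v)) := by
    simp only [LinearMap.add_apply, map_add]
    rw [hXXY, hXYX, hYXY, hYYX]
    abel
  have s4 : (X + Y) ((Z (X v) + Z (X v) + Z (X v)) - (Z (Y v) + Z (Y v) + Z (Y v)))
      = -(Z (Z v) + Z (Z v) + Z (Z v)) := by
    simp only [LinearMap.add_apply, map_add, map_sub]
    rw [hXZ' (X v), hYZ' (X v), hXZ' (Y v), hYZ' (Y v), hXv, hYv, map_zero, hZZv]
    abel
  have s5 : (X + Y) (-(Z (Z v) + Z (Z v) + Z (Z v))) = 0 := by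
    simp only [LinearMap.add_apply, map_neg, map_add]
    rw [hXZ' (Z v), hXZ' v, hYZ' (Z v), hYZ' v, hTz, hUz]
    simp
  rw [e, s1, s2, s3, s4, s5]
end

section
/- For all natural numbers k and l one has the identity (k + l)! • Z^k (X^l v) = ((−1)^k · l!) • Y^k (X^{k+l} v) (equivalently, Z^k (X^l v) = ((−1)^k / ((l+1)(l+2)⋯(l+k))) • Y^k (X^{k+l} v) in the characteristic-zero field). -/
theorem Z_pow_X_pow_eq {K V : Type*} [Field K] [CharZero K] [AddCommGroup V] [Module K V]
    (X Y Z : Module.End K V)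
    (hZ : Z = X * Y - Y * X)
    (hXZ : X * Z = Z * X)
    (hYZ : Y * Z = Z * Y)
    (v : V) (hYv : Y v = 0)
    (k l : ℕ) :
    (k + l).factorial • ((Z ^ k) ((X ^ l) v)) =
      ((-1 : ℤ) ^ k * (l.factorial : ℤ)) • ((Y ^ k) ((X ^ (k + l)) v)) := by
  have cZX : ∀ n : ℕ, Z * X ^ n = X ^ n * Z := fun n =>
    ((Commute.pow_right (hXZ.symm : Commute Z X) n)).eq
  have cZY : ∀ n : ℕ, Y ^ n * Z = Z * Y ^ n := fun n =>
    ((Commute.pow_left (hYZ : Commute Y Z) n)).eq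
  have hYX : Y * X = X * Y - Z := by rw [hZ]; abel
  -- key: Y * X^(m+1) = X^(m+1) * Y - (m+1) • (Z * X^m)
  have key : ∀ m : ℕ, Y * X ^ (m + 1) = X ^ (m + 1) * Y - ((m : ℤ) + 1) • (Z * X ^ m) := by
    intro m
    induction m with
    | zero =>
      rw [pow_one, pow_zero, mul_one, hYX]
      push_cast
      module
    | succ m ih =>
      have h1 : Y * X ^ (m + 2) = (Y * X ^ (m + 1)) * X := by
        rw [mul_assoc, ← pow_succ]
      rw [h1, ih]
      have e1 : (X ^ (m + 1) * Y - ((m : ℤ) + 1) • (Z * X ^ m)) * X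
          = X ^ (m + 1) * (Y * X) - ((m : ℤ) + 1) • (Z * X ^ (m + 1)) := by
        rw [sub_mul, mul_assoc, smul_mul_assoc, mul_assoc, ← pow_succ]
      rw [e1, hYX, mul_sub, ← mul_assoc, ← pow_succ, cZX (m+1)]
      push_cast
      module
  -- applied version
  have keyv : ∀ m : ℕ, Y ((X ^ (m + 1)) v) = (-((m : ℤ) + 1)) • (Z ((X ^ m) v)) := by
    intro m
    have h := congrArg (fun f : Module.End K V => f v) (key m)
    simp only [Module.End.mul_apply, LinearMap.sub_apply, LinearMap.smul_apply] at h
    rw [h, hYv, map_zero, zero_sub, ← neg_smul]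
  induction k with
  | zero => simp
  | succ k ih =>
    set A := (Z ^ k) ((X ^ l) v) with hA
    set B := (Y ^ k) ((X ^ (k + l)) v) with hB
    have hY : (Y ^ (k+1)) ((X ^ (k+1+l)) v) = (-(((k:ℤ) + l) + 1)) • (Z B) := by
      have e : k + 1 + l = (k + l) + 1 := by omega
      rw [e, pow_succ, Module.End.mul_apply, keyv (k+l), map_zsmul]
      have hc := congrArg (fun f : Module.End K V => f ((X ^ (k+l)) v)) (cZY k)
      simp only [Module.End.mul_apply] at hc
      rw [hc]
      push_cast
      ring_nf
      rfl
    have hZpow : (Z ^ (k+1)) ((X ^ l) v) = Z A := by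
      rw [pow_succ', Module.End.mul_apply]
    have hZih : (k + l).factorial • Z A = ((-1 : ℤ) ^ k * (l.factorial : ℤ)) • Z B := by
      have h := congrArg (fun w => Z w) ih
      simpa only [map_nsmul, map_zsmul] using h
    rw [hZpow, hY]
    have hfac : (k + 1 + l).factorial • Z A
        = (k + l + 1) • ((k + l).factorial • Z A) := by
      rw [← mul_smul, show k + 1 + l = (k + l) + 1 from by omega, Nat.factorial_succ]
    rw [hfac, hZih, ← natCast_zsmul, smul_smul, smul_smul]
    congr 1
    push_cast
    ring
end

section
/- For every natural number n one has (X + Y)^n v = ∑_{k, l ≥ 0, 2k + l = n} (−1)^k · (n! / (k! · l! · 2^k)) • Z^k (X^l v), where each coefficient n!/(k!·l!·2^k) with 2k + l = n is a positive integer. (This is the coefficient form of the Baker–Campbell–Hausdorff identity e^{t(X+Y)} v = e^{−t²Z/2} e^{tX} v.) -/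
def bchE : ℕ → ℕ
  | 0 => 1
  | k + 1 => (2 * k + 1) * bchE k

lemma bchE_pos (k : ℕ) : 0 < bchE k := by
  induction k with
  | zero => simp [bchE]
  | succ k ih =>
      simp only [bchE]
      exact Nat.mul_pos (by omega) ih

lemma bchE_fac (k : ℕ) : k.factorial * 2 ^ k * bchE k = (2 * k).factorial := by
  induction k with
  | zero => simp [bchE]
  | succ k ih =>
      have h2 : 2 * (k + 1) = (2 * k + 1) + 1 := by ring
      rw [h2, Nat.factorial_succ, Nat.factorial_succ, Nat.factorial_succ, bchE, pow_succ]
      rw [← ih]; ring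

def bchD (k l : ℕ) : ℕ := (2 * k + l).choose l * bchE k

lemma bchD_pos (k l : ℕ) : 0 < bchD k l :=
  Nat.mul_pos (Nat.choose_pos (by omega)) (bchE_pos k)

lemma bchD_fac (k l : ℕ) :
    k.factorial * l.factorial * 2 ^ k * bchD k l = (2 * k + l).factorial := by
  have h := Nat.add_choose_mul_factorial_mul_factorial (2 * k) l
  unfold bchD
  rw [← h, ← bchE_fac k]
  ring

lemma bchD_zero (l : ℕ) : bchD 0 l = 1 := by simp [bchD, bchE]

lemma bchD_succ_zero (k : ℕ) : bchD (k + 1) 0 = bchD k 1 := by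
  simp [bchD, bchE, Nat.choose_one_right]

lemma bchD_rec (k l : ℕ) :
    bchD (k + 1) (l + 1) = bchD (k + 1) l + (l + 2) * bchD k (l + 2) := by
  have h1 := bchD_fac (k + 1) (l + 1)
  have h2 := bchD_fac (k + 1) l
  have h3 := bchD_fac k (l + 2)
  have e1 : 2 * (k + 1) + (l + 1) = (2 * k + l + 2) + 1 := by ring
  have e2 : 2 * (k + 1) + l = 2 * k + l + 2 := by ring
  have e3 : 2 * k + (l + 2) = 2 * k + l + 2 := by ring
  rw [e1, Nat.factorial_succ] at h1
  rw [e2] at h2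
  rw [e3] at h3
  have hP : 0 < (k + 1).factorial * (l + 1).factorial * 2 ^ (k + 1) := by positivity
  apply Nat.eq_of_mul_eq_mul_left hP
  simp only [Nat.factorial_succ, pow_succ] at h1 h2 h3 ⊢
  zify at h1 h2 h3 ⊢
  linear_combination h1 - ((l : ℤ) + 1) * h2 - 2 * ((k : ℤ) + 1) * h3

lemma bchD_fac_div {n k l : ℕ} (h : 2 * k + l = n) :
    n.factorial / (k.factorial * l.factorial * 2 ^ k) = bchD k l := by
  subst h
  exact Nat.div_eq_of_eq_mul_left (by positivity) (by rw [← bchD_fac k l]; ring)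

theorem bch_coefficient_expansion {K V : Type*} [Field K] [CharZero K]
    [AddCommGroup V] [Module K V]
    (X Y Z : Module.End K V)
    (hZ : Z = X * Y - Y * X)
    (hXZ : X * Z = Z * X)
    (hYZ : Y * Z = Z * Y)
    (v : V) (hYv : Y v = 0)
    (n : ℕ) :
    (((X + Y) ^ n) v =
      ∑ kl ∈ (Finset.range (n + 1) ×ˢ Finset.range (n + 1)).filter
          (fun kl => 2 * kl.1 + kl.2 = n),
        ((-1 : ℤ) ^ kl.1 *
            ((n.factorial / (kl.1.factorial * kl.2.factorial * 2 ^ kl.1) : ℕ) : ℤ)) •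
          ((Z ^ kl.1) ((X ^ kl.2) v))) ∧
    ∀ k l : ℕ, 2 * k + l = n →
      (k.factorial * l.factorial * 2 ^ k) ∣ n.factorial ∧
      0 < n.factorial / (k.factorial * l.factorial * 2 ^ k) := by
  constructor
  · -- operator commutation helpers
    have hXpow : ∀ (k : ℕ) (w : V), X ((Z ^ k) w) = (Z ^ k) (X w) := by
      intro k w
      have cXZ : Commute X Z := hXZ
      have h : X * Z ^ k = Z ^ k * X := cXZ.pow_right k
      have := DFunLike.congr_fun h w
      simpa [Module.End.mul_apply] using this
    have hYpow : ∀ (k : ℕ) (w : V), Y ((Z ^ k) w) = (Z ^ k) (Y w) := by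
      intro k w
      have cYZ : Commute Y Z := hYZ
      have h : Y * Z ^ k = Z ^ k * Y := cYZ.pow_right k
      have := DFunLike.congr_fun h w
      simpa [Module.End.mul_apply] using this
    have hYX : ∀ l : ℕ, Y ((X ^ l) v) = -((l : ℤ) • Z ((X ^ (l - 1)) v)) := by
      intro l
      induction l with
      | zero => simp [hYv]
      | succ l ih =>
          have hYXm : Y * X = X * Y - Z := by rw [hZ]; noncomm_ring
          have step : Y ((X ^ (l + 1)) v) = X (Y ((X ^ l) v)) - Z ((X ^ l) v) := by
            rw [pow_succ']
            have := DFunLike.congr_fun hYXm ((X ^ l) v)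
            simp only [Module.End.mul_apply, LinearMap.sub_apply] at this ⊢
            exact this
          rw [step, ih]
          cases l with
          | zero => simp
          | succ j =>
              have hcomm : X (Z ((X ^ j) v)) = Z ((X ^ (j + 1)) v) := by
                have := DFunLike.congr_fun hXZ ((X ^ j) v)
                simp only [Module.End.mul_apply] at this
                rw [this, pow_succ']
                simp [Module.End.mul_apply]
              simp only [Nat.add_sub_cancel]
              rw [map_neg, map_zsmul, hcomm]
              push_cast
              module
    -- main induction, single-index form
    have main : ∀ m : ℕ, ((X + Y) ^ m) v =
        ∑ k ∈ Finset.range (m / 2 + 1),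
          (((-1 : ℤ) ^ k * (bchD k (m - 2 * k) : ℤ)) • (Z ^ k) ((X ^ (m - 2 * k)) v)) := by
      intro m
      induction m with
      | zero => simp [bchD_zero]
      | succ m ih =>
          set t := m / 2 + 1 with ht
          have hpow : ((X + Y) ^ (m + 1)) v = (X + Y) (((X + Y) ^ m) v) := by
            rw [pow_succ']; simp [Module.End.mul_apply]
          set A : ℕ → V := fun k =>
            (((-1 : ℤ) ^ k * (bchD k (m - 2 * k) : ℤ)) • (Z ^ k) ((X ^ (m - 2 * k + 1)) v)) with hA
          set B : ℕ → V := fun k =>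
            (((-1 : ℤ) ^ (k + 1) * (((m - 2 * k) * bchD k (m - 2 * k) : ℕ) : ℤ)) •
              (Z ^ (k + 1)) ((X ^ (m - 2 * k - 1)) v)) with hB
          set C : ℕ → V := fun k => match k with | 0 => 0 | (j + 1) => B j with hC
          set G : ℕ → V := fun k =>
            (((-1 : ℤ) ^ k * (bchD k (m + 1 - 2 * k) : ℤ)) • (Z ^ k) ((X ^ (m + 1 - 2 * k)) v))
            with hG
          have hterm : ∀ k : ℕ,
              (X + Y) ((((-1 : ℤ) ^ k * (bchD k (m - 2 * k) : ℤ)) •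
                (Z ^ k) ((X ^ (m - 2 * k)) v))) = A k + B k := by
            intro k
            set l := m - 2 * k with hl
            have hX1 : X ((Z ^ k) ((X ^ l) v)) = (Z ^ k) ((X ^ (l + 1)) v) := by
              rw [hXpow, pow_succ']
              simp [Module.End.mul_apply]
            have hY1 : Y ((Z ^ k) ((X ^ l) v)) =
                -((l : ℤ) • (Z ^ (k + 1)) ((X ^ (l - 1)) v)) := by
              have hstep : ∀ u : V, (Z ^ k) (Z u) = (Z ^ (k + 1)) u := by
                intro u
                rw [pow_succ]
                simp [Module.End.mul_apply]
              rw [hYpow, hYX l, map_neg, map_zsmul, hstep]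
            rw [map_zsmul, LinearMap.add_apply, hX1, hY1, hA, hB]
            simp only [smul_add, smul_neg, smul_smul]
            push_cast
            module
          rw [hpow, ih, map_sum]
          rw [Finset.sum_congr rfl (fun k _ => hterm k), Finset.sum_add_distrib]
          have hBC : ∑ k ∈ Finset.range t, B k = ∑ k ∈ Finset.range (t + 1), C k := by
            rw [Finset.sum_range_succ' C t]
            simp [hC]
          rw [hBC]
          have key : ∀ k ∈ Finset.range t, A k + C k = G k := by
            intro k hk
            simp only [Finset.mem_range, ht] at hk
            match k with
            | 0 =>
                simp only [hA, hC, hG, add_zero]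
                norm_num [bchD_zero]
            | (j + 1) =>
                have h2j : 2 * j + 2 ≤ m := by omega
                set L := m - 2 * j - 2 with hLdef
                have e1 : m - 2 * (j + 1) = L := by omega
                have e2 : m - 2 * (j + 1) + 1 = L + 1 := by omega
                have e3 : m - 2 * j = L + 2 := by omega
                have e4 : m - 2 * j - 1 = L + 1 := by omega
                have e5 : m + 1 - 2 * (j + 1) = L + 1 := by omega
                have e6 : L + 2 - 1 = L + 1 := rfl
                simp only [hA, hB, hC, hG, e1, e2, e3, e4, e5, e6]
                rw [← add_smul]
                congr 1
                rw [bchD_rec j L]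
                push_cast
                ring
          rcases Nat.even_or_odd m with ⟨p, hp⟩ | ⟨p, hp⟩
          · have ht1 : t = p + 1 := by omega
            have ht2 : (m + 1) / 2 + 1 = p + 1 := by omega
            have hCt : C t = 0 := by
              rw [ht1]
              show B p = 0
              simp [hB, show m - 2 * p = 0 by omega]
            rw [Finset.sum_range_succ C t, hCt, add_zero, ← Finset.sum_add_distrib,
              Finset.sum_congr rfl key, ht2, ← ht1]
          · have ht1 : t = p + 1 := by omega
            have ht2 : (m + 1) / 2 + 1 = (p + 1) + 1 := by omega
            have hCt : C t = G t := by
              rw [ht1]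
              show B p = G (p + 1)
              simp only [hB, hG, show m - 2 * p = 1 by omega,
                show m - 2 * p - 1 = 0 by omega, show m + 1 - 2 * (p + 1) = 0 by omega]
              rw [bchD_succ_zero]
              norm_num
            rw [Finset.sum_range_succ C t, ← add_assoc, ← Finset.sum_add_distrib,
              Finset.sum_congr rfl key, hCt, ht2, ← ht1, Finset.sum_range_succ G t]
    rw [main n]
    symm
    refine Finset.sum_nbij' (fun kl => kl.1) (fun k => (k, n - 2 * k)) ?_ ?_ ?_ ?_ ?_
    · intro a ha
      simp only [Finset.mem_filter, Finset.mem_product, Finset.mem_range] at ha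
      simp only [Finset.mem_range]
      omega
    · intro a ha
      simp only [Finset.mem_range] at ha
      simp only [Finset.mem_filter, Finset.mem_product, Finset.mem_range]
      omega
    · intro a ha
      simp only [Finset.mem_filter, Finset.mem_product, Finset.mem_range] at ha
      ext <;> simp <;> omega
    · intro a ha; rfl
    · intro a ha
      simp only [Finset.mem_filter, Finset.mem_product, Finset.mem_range] at ha
      have hl : a.2 = n - 2 * a.1 := by omega
      rw [bchD_fac_div ha.2, hl]
  · intro k l h
    constructor
    · exact ⟨bchD k l, by rw [← h, ← bchD_fac k l]⟩
    · rw [bchD_fac_div h]; exact bchD_pos k l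
end

section
/- Then (X + Y)^3 v = 3 • (Z (X v) − Z (Y v)). -/
theorem XY_cube_apply {K V : Type*} [Field K] [CharZero K] [AddCommGroup V] [Module K V]
    (X Y Z : Module.End K V)
    (hZ : Z = X * Y - Y * X)
    (hXZ : X * Z = Z * X)
    (hYZ : Y * Z = Z * Y)
    (v : V) (hXv : X (X v) = 0) (hYv : Y (Y v) = 0) :
    ((X + Y) ^ 3) v = (3 : ℤ) • (Z (X v) - Z (Y v)) := by
  have hz : ∀ w, X (Y w) = Z w + Y (X w) := by
    intro w
    rw [hZ]
    simp [Module.End.mul_apply]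
  have hxz : ∀ w, X (Z w) = Z (X w) := by
    intro w
    have := congrArg (fun f : Module.End K V => f w) hXZ
    simpa [Module.End.mul_apply] using this
  have hyz : ∀ w, Y (Z w) = Z (Y w) := by
    intro w
    have := congrArg (fun f : Module.End K V => f w) hYZ
    simpa [Module.End.mul_apply] using this
  have h1 : X (X (Y v)) = Z (X v) + Z (X v) := by
    rw [hz v, map_add, hxz, hz (X v), hXv, map_zero, add_zero]
  have h2 : X (Y (X v)) = Z (X v) := by
    rw [hz (X v), hXv, map_zero, add_zero]
  have h3 : Y (X (Y v)) = -Z (Y v) := by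
    have := hz (Y v)
    rw [hYv, map_zero] at this
    exact eq_neg_of_add_eq_zero_right this.symm
  have h4 : Y (Y (X v)) = -Z (Y v) + -Z (Y v) := by
    have hYX : Y (X v) = -Z v + X (Y v) := by rw [hz v]; abel
    rw [hYX, map_add, map_neg, hyz, h3]
  have expand : ((X + Y) ^ 3) v
      = X (X (X v)) + X (X (Y v)) + X (Y (X v)) + X (Y (Y v))
        + Y (X (X v)) + Y (X (Y v)) + Y (Y (X v)) + Y (Y (Y v)) := by
    simp only [pow_succ, pow_zero, one_mul, Module.End.mul_apply, LinearMap.add_apply,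
      map_add]
    abel
  rw [expand, hXv, hYv, map_zero, map_zero, h1, h2, h3, h4]
  module
end

section
/- Then (X + Y)^4 v = −3 • Z (Z v). -/
theorem XY_fourth_apply {K V : Type*} [Field K] [CharZero K] [AddCommGroup V] [Module K V]
    (X Y Z : Module.End K V)
    (hZ : Z = X * Y - Y * X)
    (hXZ : X * Z = Z * X)
    (hYZ : Y * Z = Z * Y)
    (v : V) (hXv : X (X v) = 0) (hYv : Y (Y v) = 0) :
    ((X + Y) ^ 4) v = (-3 : ℤ) • Z (Z v) := by
  subst hZ
  have kX : ∀ w : V, X (X (Y w)) = X (Y (X w)) + X (Y (X w)) - Y (X (X w)) := by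
    intro w
    have h := LinearMap.congr_fun hXZ w
    simp only [Module.End.mul_apply, LinearMap.sub_apply, map_sub] at h
    rw [eq_add_of_sub_eq h]; abel
  have kY : ∀ w : V, Y (Y (X w)) = Y (X (Y w)) + Y (X (Y w)) - X (Y (Y w)) := by
    intro w
    have h := LinearMap.congr_fun hYZ w
    simp only [Module.End.mul_apply, LinearMap.sub_apply, map_sub] at h
    have h2 : Y (Y (X w)) = Y (X (Y w)) - (X (Y (Y w)) - Y (X (Y w))) := by
      rw [← h]; abel
    rw [h2]; abel
  have k5 : X (X (Y (X v))) = 0 := by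
    rw [kX (X v)]; simp [hXv]
  have k6 : Y (Y (X (Y v))) = 0 := by
    rw [kY (Y v)]; simp [hYv]
  have k3 : X (X (X (Y v))) = 0 := by
    rw [kX v]; simp [map_add, map_sub, hXv, k5]
  have k4 : Y (Y (Y (X v))) = 0 := by
    rw [kY v]; simp [map_add, map_sub, hYv, k6]
  have k1 : X (Y (Y (X v))) = X (Y (X (Y v))) + X (Y (X (Y v))) := by
    rw [kY v]; simp [hYv]
  have k2 : Y (X (X (Y v))) = Y (X (Y (X v))) + Y (X (Y (X v))) := by
    rw [kX v]; simp [hXv]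
  have e : ((X + Y) ^ 4) v = X (X (X (X v))) + X (X (X (Y v))) + X (X (Y (X v)))
      + X (X (Y (Y v))) + X (Y (X (X v))) + X (Y (X (Y v))) + X (Y (Y (X v)))
      + X (Y (Y (Y v))) + Y (X (X (X v))) + Y (X (X (Y v))) + Y (X (Y (X v)))
      + Y (X (Y (Y v))) + Y (Y (X (X v))) + Y (Y (X (Y v))) + Y (Y (Y (X v)))
      + Y (Y (Y (Y v))) := by
    have : (X + Y) ^ 4 = X*X*X*X + X*X*X*Y + X*X*Y*X + X*X*Y*Y + X*Y*X*X + X*Y*X*Y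
        + X*Y*Y*X + X*Y*Y*Y + Y*X*X*X + Y*X*X*Y + Y*X*Y*X + Y*X*Y*Y + Y*Y*X*X
        + Y*Y*X*Y + Y*Y*Y*X + Y*Y*Y*Y := by noncomm_ring
    rw [this]
    simp [LinearMap.add_apply, Module.End.mul_apply]
  rw [e]
  simp only [Module.End.mul_apply, LinearMap.sub_apply, map_sub, hXv, hYv, map_zero,
    zero_sub, sub_zero, k1, k2, k3, k4, k5, k6]
  abel
end

section
/- Then Z (Z (X v)) = 0 and Z (Z (Y v)) = 0. -/
private lemma aux_Z_sq {K V : Type*} [Field K] [CharZero K] [AddCommGroup V] [Module K V]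
    (X Y Z : Module.End K V)
    (hZ : Z = X * Y - Y * X)
    (hXZ : X * Z = Z * X)
    (hYZ : Y * Z = Z * Y)
    (v : V) (hXv : X (X v) = 0) (hYv : Y (Y v) = 0) :
    Z (Z (X v)) = 0 := by
  have hZw : ∀ w : V, Z w = X (Y w) - Y (X w) := by
    intro w; rw [hZ]; simp [Module.End.mul_apply]
  have cX : ∀ w : V, X (Z w) = Z (X w) := fun w => by
    simpa [Module.End.mul_apply] using LinearMap.ext_iff.mp hXZ w
  have cY : ∀ w : V, Y (Z w) = Z (Y w) := fun w => by
    simpa [Module.End.mul_apply] using LinearMap.ext_iff.mp hYZ w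
  have e1 : Z (X v) = X (Y (X v)) := by
    rw [hZw (X v), hXv, map_zero, sub_zero]
  have e2 : X (X (Y v)) = Z (X v) + Z (X v) := by
    have h : Z (X v) = X (X (Y v)) - X (Y (X v)) := by
      rw [← cX v, hZw v, map_sub]
    linear_combination (norm := module) -h - e1
  have e3 : Y (Y (X v)) = -(Z (Y v) + Z (Y v)) := by
    have hb1 : Z (Y v) = -(Y (X (Y v))) := by
      rw [hZw (Y v), hYv, map_zero, zero_sub]
    have hb2 : Z (Y v) = Y (X (Y v)) - Y (Y (X v)) := by
      rw [← cY v, hZw v, map_sub]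
    linear_combination (norm := module) hb1 + hb2
  have e4 : X (Y (Y (X v))) = Y (X (Y (X v))) + Y (X (Y (X v))) := by
    have hc1 : Z (Y (X v)) = X (Y (Y (X v))) - Y (X (Y (X v))) := hZw (Y (X v))
    have hc2 : Z (Y (X v)) = Y (X (Y (X v))) := by
      rw [← cY (X v), e1]
    linear_combination (norm := module) hc2 - hc1
  have e5 : Z (Z (X v)) = X (Y (X (Y (X v)))) := by
    rw [e1, ← cX (Y (X v)), ← cY (X v), e1]
  have f1 : X (X (Y (Y (X v)))) = Z (Z (X v)) + Z (Z (X v)) := by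
    rw [e4, map_add, ← e5]
  have f2 : X (X (Y (Y (X v)))) =
      -((Z (Z (X v)) + Z (Z (X v))) + (Z (Z (X v)) + Z (Z (X v)))) := by
    rw [e3, map_neg, map_neg, map_add, map_add, cX (Y v), cX (X (Y v)), e2, map_add]
  have h6 : (6 : K) • Z (Z (X v)) = 0 := by
    linear_combination (norm := module) f2 - f1
  rcases smul_eq_zero.mp h6 with h | h
  · exact absurd h (by norm_num)
  · exact h

theorem Z_sq_X_v_eq_zero {K V : Type*} [Field K] [CharZero K] [AddCommGroup V] [Module K V]
    (X Y Z : Module.End K V)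
    (hZ : Z = X * Y - Y * X)
    (hXZ : X * Z = Z * X)
    (hYZ : Y * Z = Z * Y)
    (v : V) (hXv : X (X v) = 0) (hYv : Y (Y v) = 0) :
    Z (Z (X v)) = 0 ∧ Z (Z (Y v)) = 0 := by
  constructor
  · exact aux_Z_sq X Y Z hZ hXZ hYZ v hXv hYv
  · have h := aux_Z_sq Y X (-Z) (by rw [hZ, neg_sub])
      (by rw [mul_neg, neg_mul, hYZ]) (by rw [mul_neg, neg_mul, hXZ]) v hYv hXv
    simpa using h
end

section
/- Let K be a field of characteristic zero, L a Lie algebra over K, and e, e′, v ∈ L with (ad e)² (e′) = 0 and (ad e′)² (e) = 0, where ad x = ⁅x, ·⁆. Let p, q be natural numbers with (ad e)^{p+1} (v) = 0 and (ad e′)^{q+1} (v) = 0, and assume p = 0, or q = 0, or (p = 1 and q = 1). Then (ad (e + e′))^{2p + 2q + 1} (v) = 0. -/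
open Module

section
variable {K L : Type*} [Field K] [CharZero K] [AddCommGroup L] [Module K L]

/-- Commutation: `A * B^(n+1) = B^(n+1) * A + (n+1) • (C * B^n)` when `A*B = B*A + C`
and `C` commutes with `B`. -/
lemma comm_pow (A B C : End K L) (hC : A * B = B * A + C) (hBC : B * C = C * B) (n : ℕ) :
    A * B ^ (n + 1) = B ^ (n + 1) * A + ((n : K) + 1) • (C * B ^ n) := by
  induction n with
  | zero => simpa using hC
  | succ n ih =>
    have hcomm : C * B = B * C := hBC.symm
    calc A * B ^ (n + 2) = (A * B ^ (n + 1)) * B := by rw [pow_succ, mul_assoc]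
    _ = (B ^ (n + 1) * A + ((n : K) + 1) • (C * B ^ n)) * B := by rw [ih]
    _ = B ^ (n + 1) * (A * B) + ((n : K) + 1) • (C * B ^ (n + 1)) := by
        rw [add_mul, smul_mul_assoc, mul_assoc, mul_assoc, ← pow_succ]
    _ = B ^ (n + 1) * (B * A + C) + ((n : K) + 1) • (C * B ^ (n + 1)) := by rw [hC]
    _ = B ^ (n + 2) * A + (B ^ (n + 1) * C + ((n : K) + 1) • (C * B ^ (n + 1))) := by
        rw [mul_add, ← mul_assoc, ← pow_succ]; abel
    _ = B ^ (n + 2) * A + ((n : K) + 1 + 1) • (C * B ^ (n + 1)) := by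
        rw [show B ^ (n+1) * C = C * B ^ (n+1) from ((Commute.pow_right hcomm.symm.symm (n+1)).symm : B ^ (n+1) * C = C * B ^ (n+1))]
        module
    _ = B ^ (n + 1 + 1) * A + ((((n:ℕ) + 1 : ℕ) : K) + 1) • (C * B ^ (n + 1)) := by push_cast; module

lemma vanish (A B C : End K L) (v : L) (q : ℕ)
    (hC : A * B = B * A + C) (hAC : A * C = C * A) (hBC : B * C = C * B)
    (hv : A v = 0) (hq : (B ^ (q + 1)) v = 0) :
    ∀ k m, q + 1 ≤ k + m → (C ^ k) ((B ^ m) v) = 0 := by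
  intro k
  induction k with
  | zero =>
    intro m hm
    obtain ⟨d, hd⟩ : ∃ d, m = d + (q + 1) := ⟨m - (q + 1), by omega⟩
    subst hd
    rw [pow_zero, Module.End.one_apply, pow_add, Module.End.mul_apply, hq, map_zero]
  | succ k ih =>
    intro m hm
    rcases le_or_gt (q + 1) (k + m) with h | h
    · rw [pow_succ', Module.End.mul_apply, ih m h, map_zero]
    · have hm' : k + (m + 1) = q + 1 := by omega
      have h0 : (C ^ k) ((B ^ (m + 1)) v) = 0 := ih (m + 1) (by omega)
      have h1 : A ((C ^ k) ((B ^ (m + 1)) v)) = 0 := by rw [h0, map_zero]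
      have hACk : A * C ^ k = C ^ k * A :=
        ((Commute.pow_right (hAC : Commute A C) k) : A * C ^ k = C ^ k * A)
      have h2 : (A * C ^ k * B ^ (m+1)) v = 0 := by
        simpa [Module.End.mul_apply] using h1
      rw [hACk] at h2
      rw [mul_assoc, comm_pow A B C hC hBC m] at h2
      have h3 : (C ^ k) (((B ^ (m+1) * A) + ((m : K) + 1) • (C * B ^ m)) v) = 0 := by
        simpa [Module.End.mul_apply] using h2
      rw [LinearMap.add_apply, LinearMap.smul_apply, Module.End.mul_apply, hv, map_zero,
        map_add, map_zero, map_smul, zero_add, Module.End.mul_apply] at h3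
      have h4 : (C ^ k) (C ((B ^ m) v)) = 0 := by
        rcases smul_eq_zero.mp h3 with h | h
        · exact absurd h (Nat.cast_add_one_ne_zero m)
        · exact h
      rw [pow_succ', Module.End.mul_apply]
      -- goal : C ((C^k) ((B^m) v)) = 0 ; h4 : (C^k) (C ((B^m) v)) = 0
      have : (C ^ (k+1)) ((B ^ m) v) = 0 := by
        rw [pow_succ, Module.End.mul_apply]; exact h4
      rw [pow_succ', Module.End.mul_apply] at this
      exact this

lemma key (A B C : End K L) (v : L) (q : ℕ)
    (hC : A * B = B * A + C) (hAC : A * C = C * A) (hBC : B * C = C * B)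
    (hv : A v = 0) (hq : (B ^ (q + 1)) v = 0) :
    ((A + B) ^ (2 * q + 1)) v = 0 := by
  have main : ∀ n k m, 2 * q + 1 ≤ 2 * k + m + n →
      ((A + B) ^ n) ((C ^ k) ((B ^ m) v)) = 0 := by
    intro n
    induction n with
    | zero =>
      intro k m hkm
      rw [pow_zero, Module.End.one_apply]
      exact vanish A B C v q hC hAC hBC hv hq k m (by omega)
    | succ n ih =>
      intro k m hkm
      have hstep : ((A + B) ^ (n+1)) ((C ^ k) ((B ^ m) v))
          = ((A + B) ^ n) ((A + B) ((C ^ k) ((B ^ m) v))) := by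
        rw [pow_succ, Module.End.mul_apply]
      rw [hstep]
      have hBCk : ∀ x, B ((C ^ k) x) = (C ^ k) (B x) := by
        intro x
        have : B * C ^ k = C ^ k * B := (Commute.pow_right (hBC : Commute B C) k)
        calc B ((C ^ k) x) = (B * C ^ k) x := by rw [Module.End.mul_apply]
        _ = (C ^ k * B) x := by rw [this]
        _ = (C ^ k) (B x) := by rw [Module.End.mul_apply]
      have hACk : ∀ x, A ((C ^ k) x) = (C ^ k) (A x) := by
        intro x
        have : A * C ^ k = C ^ k * A := (Commute.pow_right (hAC : Commute A C) k)
        calc A ((C ^ k) x) = (A * C ^ k) x := by rw [Module.End.mul_apply]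
        _ = (C ^ k * A) x := by rw [this]
        _ = (C ^ k) (A x) := by rw [Module.End.mul_apply]
      rw [LinearMap.add_apply, hACk, hBCk]
      have hBm : B ((B ^ m) v) = (B ^ (m+1)) v := by
        rw [pow_succ', Module.End.mul_apply]
      rw [hBm]
      cases m with
      | zero =>
        rw [pow_zero, Module.End.one_apply, hv, map_zero, zero_add]
        exact ih k 1 (by omega)
      | succ m' =>
        have hAB : A ((B ^ (m'+1)) v) = ((m' : K) + 1) • (C ((B ^ m') v)) := by
          have := LinearMap.congr_fun (comm_pow A B C hC hBC m') v
          rw [Module.End.mul_apply, LinearMap.add_apply, Module.End.mul_apply, hv, map_zero,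
            LinearMap.smul_apply, Module.End.mul_apply, zero_add] at this
          exact this
        rw [hAB, map_smul, map_add, map_smul]
        have e1 : ((A + B) ^ n) ((C ^ k) (C ((B ^ m') v))) = 0 := by
          have : (C ^ k) (C ((B ^ m') v)) = (C ^ (k+1)) ((B ^ m') v) := by
            rw [pow_succ, Module.End.mul_apply]
          rw [this]
          exact ih (k+1) m' (by omega)
        have e2 : ((A + B) ^ n) ((C ^ k) ((B ^ (m'+1+1)) v)) = 0 := ih k (m'+2) (by omega)
        rw [e1, e2, smul_zero, add_zero]
  have := main (2*q+1) 0 0 (by omega)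
  simpa using this

end

attribute [local instance 100] LieRing.ofAssociativeRing

theorem serre_conjecture_small_pq {K L : Type*} [Field K] [CharZero K]
    [LieRing L] [LieAlgebra K L]
    (e e' v : L)
    (he : ((LieAlgebra.ad K L e) ^ 2) e' = 0)
    (he' : ((LieAlgebra.ad K L e') ^ 2) e = 0)
    (p q : ℕ)
    (hp : ((LieAlgebra.ad K L e) ^ (p + 1)) v = 0)
    (hq : ((LieAlgebra.ad K L e') ^ (q + 1)) v = 0)
    (hpq : p = 0 ∨ q = 0 ∨ (p = 1 ∧ q = 1)) :
    ((LieAlgebra.ad K L (e + e')) ^ (2 * p + 2 * q + 1)) v = 0 := by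
  set A := LieAlgebra.ad K L e with hA
  set B := LieAlgebra.ad K L e' with hB
  set C := LieAlgebra.ad K L ⁅e, e'⁆ with hCdef
  have hadd : LieAlgebra.ad K L (e + e') = A + B := by
    rw [hA, hB]; exact map_add _ e e'
  have hCcomm : C = A * B - B * A := by
    rw [hCdef, hA, hB, LieHom.map_lie]
    rfl
  have he2 : ⁅e, ⁅e, e'⁆⁆ = 0 := by
    have : ((LieAlgebra.ad K L e) ^ 2) e' = ⁅e, ⁅e, e'⁆⁆ := by
      rw [pow_two, Module.End.mul_apply]; rfl
    rw [← this, he]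
  have he'2 : ⁅e', ⁅e', e⁆⁆ = 0 := by
    have : ((LieAlgebra.ad K L e') ^ 2) e = ⁅e', ⁅e', e⁆⁆ := by
      rw [pow_two, Module.End.mul_apply]; rfl
    rw [← this, he']
  have hAC : A * C = C * A := by
    have h : ⁅A, C⁆ = LieAlgebra.ad K L ⁅e, ⁅e, e'⁆⁆ := (LieHom.map_lie _ _ _).symm
    rw [he2, map_zero] at h
    have := Ring.lie_def A C ▸ h
    rw [sub_eq_zero] at this
    exact this
  have hBC : B * C = C * B := by
    have h : ⁅B, C⁆ = LieAlgebra.ad K L ⁅e', ⁅e, e'⁆⁆ := (LieHom.map_lie _ _ _).symm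
    have : ⁅e', ⁅e, e'⁆⁆ = 0 := by
      rw [show ⁅e, e'⁆ = -⁅e', e⁆ from (lie_skew e e').symm, lie_neg, he'2, neg_zero]
    rw [this, map_zero] at h
    have h2 := Ring.lie_def B C ▸ h
    rw [sub_eq_zero] at h2
    exact h2
  have hC : A * B = B * A + C := by rw [hCcomm]; abel
  rw [hadd]
  rcases hpq with hp0 | hq0 | ⟨hp1, hq1⟩
  · subst hp0
    have hv : A v = 0 := by simpa using hp
    have := key A B C v q hC hAC hBC hv hq
    simpa using this
  · subst hq0
    have hv : B v = 0 := by simpa using hq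
    have hC' : B * A = A * B + (-C) := by rw [hCcomm]; abel
    have hBC' : B * (-C) = (-C) * B := by rw [mul_neg, neg_mul, hBC]
    have hAC' : A * (-C) = (-C) * A := by rw [mul_neg, neg_mul, hAC]
    have := key B A (-C) v p hC' hBC' hAC' hv hp
    rw [add_comm A B]
    simpa using this
  · subst hp1; subst hq1
    have ha : A (A v) = 0 := by
      have h2 : (A ^ (1+1)) v = A (A v) := by
        rw [pow_succ, pow_one, Module.End.mul_apply]
      rw [← h2]; exact hp
    have hb : B (B v) = 0 := by
      have h2 : (B ^ (1+1)) v = B (B v) := by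
        rw [pow_succ, pow_one, Module.End.mul_apply]
      rw [← h2]; exact hq
    have eAB : ∀ x : L, A (B x) = B (A x) + C x := by
      intro x
      have := LinearMap.congr_fun hC x
      simpa [Module.End.mul_apply] using this
    have eAC : ∀ x : L, A (C x) = C (A x) := by
      intro x
      have := LinearMap.congr_fun hAC x
      simpa [Module.End.mul_apply] using this
    have eBC : ∀ x : L, B (C x) = C (B x) := by
      intro x
      have := LinearMap.congr_fun hBC x
      simpa [Module.End.mul_apply] using this
    have e8 : B (B (A v)) = -(C (B v) + C (B v)) := by
      have h0 : A (B (B v)) = 0 := by rw [hb, map_zero]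
      simp only [eAB, map_add] at h0
      rw [eBC] at h0
      linear_combination (norm := module) h0
    -- z1 : C (C (A v)) = 0
    have hz1 := congrArg (fun x => A (A x)) e8
    simp only [eAB, eAC, eBC, ha, map_add, map_neg, map_zero, zero_add, add_zero] at hz1
    have hz1' : (6 : K) • C (C (A v)) = 0 := by
      linear_combination (norm := module) hz1
    have z1 : C (C (A v)) = 0 := by
      rcases smul_eq_zero.mp hz1' with h | h
      · exact absurd h (by norm_num)
      · exact h
    -- z2 : C (C (B v)) = 0
    have hz2 := congrArg (fun x => A (B x)) e8
    simp only [eAB, eAC, eBC, ha, hb, map_add, map_neg, map_zero, zero_add, add_zero,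
      neg_zero] at hz2
    -- expected: hz2 : sum of three copies of C (B (B (A v))) = 0 (up to shape)
    have hz2' : (3 : K) • C (B (B (A v))) = 0 := by
      linear_combination (norm := module) hz2
    have hz2'' : C (B (B (A v))) = 0 := by
      rcases smul_eq_zero.mp hz2' with h | h
      · exact absurd h (by norm_num)
      · exact h
    have hz3 := congrArg (fun x => C x) e8
    simp only [map_add, map_neg] at hz3
    rw [hz2''] at hz3
    have hz3' : (2 : K) • C (C (B v)) = 0 := by
      linear_combination (norm := module) hz3
    have z2 : C (C (B v)) = 0 := by
      rcases smul_eq_zero.mp hz3' with h | h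
      · exact absurd h (by norm_num)
      · exact h
    have hexp : ((A + B) ^ (5 : ℕ)) v
        = (A + B) ((A + B) ((A + B) ((A + B) ((A + B) v)))) := by
      rw [show (5 : ℕ) = 4 + 1 from rfl, pow_succ, Module.End.mul_apply,
        show (4 : ℕ) = 3 + 1 from rfl, pow_succ, Module.End.mul_apply,
        show (3 : ℕ) = 2 + 1 from rfl, pow_succ, Module.End.mul_apply,
        show (2 : ℕ) = 1 + 1 from rfl, pow_succ, Module.End.mul_apply, pow_one]
    rw [show (2 * 1 + 2 * 1 + 1 : ℕ) = 5 by norm_num, hexp]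
    simp only [LinearMap.add_apply, map_add, map_neg, map_zero, eAB, eAC, eBC, ha, hb,
      e8, z1, z2, add_zero, zero_add, neg_zero, neg_add_rev, neg_neg]
end

section
/- Let K be a field of characteristic zero, L a Lie algebra over K, D : L → L a K-linear derivation (D⁅x,y⁆ = ⁅D x, y⁆ + ⁅x, D y⁆ for all x, y), and u ∈ L such that (ad u)^N = 0 for some natural number N, where ad x = ⁅x, ·⁆. Define exp(ad u)(x) = ∑_{k=0}^{N−1} (1/k!) • (ad u)^k (x) and ∇u = ∑_{m=0}^{N−1} (1/(m+1)!) • (ad u)^m (D u). Then for every x ∈ L: D (exp(ad u)(x)) = ⁅∇u, exp(ad u)(x)⁆ + exp(ad u)(D x). -/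
open Finset

section Aux

variable {K L : Type*} [Field K] [CharZero K] [LieRing L] [LieAlgebra K L]

omit [CharZero K] in
/-- Leibniz rule for powers of `ad`. -/
lemma ad_pow_lie (u : L) (j : ℕ) (z w : L) :
    ((LieAlgebra.ad K L u) ^ j) ⁅z, w⁆ =
      ∑ p ∈ range (j + 1), j.choose p •
        ⁅((LieAlgebra.ad K L u) ^ p) z, ((LieAlgebra.ad K L u) ^ (j - p)) w⁆ := by
  have hcoe : ⇑(LieDerivation.ad K L u) = ⇑(LieAlgebra.ad K L u) := by
    ext y; rw [← LieDerivation.coe_ad_apply_eq_ad_apply]; rfl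
  have h := LieDerivation.iterate_apply_lie' (LieDerivation.ad K L u) j z w
  simpa [hcoe, Module.End.pow_apply] using h

end Aux

lemma sum_lie_aux {L : Type*} [LieRing L] {ι : Type*} (s : Finset ι) (f : ι → L) (w : L) :
    ⁅∑ i ∈ s, f i, w⁆ = ∑ i ∈ s, ⁅f i, w⁆ := by
  induction s using Finset.cons_induction with
  | empty => simp
  | cons i s hi ih => rw [Finset.sum_cons, Finset.sum_cons, add_lie, ih]

lemma lie_sum_aux {L : Type*} [LieRing L] {ι : Type*} (s : Finset ι) (f : ι → L) (w : L) :
    ⁅w, ∑ i ∈ s, f i⁆ = ∑ i ∈ s, ⁅w, f i⁆ := by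
  induction s using Finset.cons_induction with
  | empty => simp
  | cons i s hi ih => rw [Finset.sum_cons, Finset.sum_cons, lie_add, ih]

/-- The dressing identity `D (e^{ad u} x) = ⁅∇u, e^{ad u} x⁆ + e^{ad u} (D x)` for a
derivation `D` and an element `u` with nilpotent adjoint action. -/
theorem derivation_exp_ad {K L : Type*} [Field K] [CharZero K] [LieRing L] [LieAlgebra K L]
    (D : L →ₗ[K] L)
    (hD : ∀ x y : L, D ⁅x, y⁆ = ⁅D x, y⁆ + ⁅x, D y⁆)
    (u : L) (N : ℕ) (hN : (LieAlgebra.ad K L u) ^ N = 0)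
    (x : L) :
    D (∑ k ∈ Finset.range N, ((k.factorial : K)⁻¹) • (((LieAlgebra.ad K L u) ^ k) x)) =
      ⁅∑ m ∈ Finset.range N,
          (((m + 1).factorial : K)⁻¹) • (((LieAlgebra.ad K L u) ^ m) (D u)),
        ∑ k ∈ Finset.range N, ((k.factorial : K)⁻¹) • (((LieAlgebra.ad K L u) ^ k) x)⁆ +
      ∑ k ∈ Finset.range N, ((k.factorial : K)⁻¹) • (((LieAlgebra.ad K L u) ^ k) (D x)) := by
  set A := LieAlgebra.ad K L u with hA
  set a := D u with ha
  set M := 2 * N with hM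
  -- powers ≥ N vanish
  have hzero : ∀ k, N ≤ k → ∀ y : L, (A ^ k) y = 0 := by
    intro k hk y
    rw [show k = (k - N) + N by omega, pow_add, Module.End.mul_apply, hN]
    simp
  -- extend sums from range N to range M
  have hext : ∀ (c : ℕ → K) (y : L),
      ∑ k ∈ range N, c k • (A ^ k) y = ∑ k ∈ range M, c k • (A ^ k) y := by
    intro c y
    refine Finset.sum_subset (Finset.range_subset_range.mpr (by omega)) ?_
    intro k hk hk'
    rw [hzero k (by simp only [mem_range] at hk hk' ⊢; omega) y, smul_zero]
  -- Leibniz rule in terms of `A`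
  have adp : ∀ (j : ℕ) (z w : L), (A ^ j) ⁅z, w⁆ =
      ∑ p ∈ range (j + 1), j.choose p • ⁅(A ^ p) z, (A ^ (j - p)) w⁆ := by
    intro j z w
    rw [hA]
    exact ad_pow_lie u j z w
  -- basic commutation
  have hDA : ∀ y : L, D (A y) = ⁅a, y⁆ + A (D y) := by
    intro y
    simpa [hA, ha, LieAlgebra.ad_apply] using hD u y
  -- derivative of powers
  have hDpow : ∀ (k : ℕ) (y : L),
      D ((A ^ k) y) = (A ^ k) (D y) + ∑ j ∈ range k, (A ^ j) ⁅a, (A ^ (k - 1 - j)) y⁆ := by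
    intro k
    induction k with
    | zero => intro y; simp
    | succ k ih =>
      intro y
      have h1 : (A ^ (k + 1)) y = (A ^ k) (A y) := by
        rw [pow_succ, Module.End.mul_apply]
      have h3 : (A ^ (k + 1)) (D y) = (A ^ k) (A (D y)) := by
        rw [pow_succ, Module.End.mul_apply]
      have h2 : ∀ j ∈ range k, (A ^ j) ⁅a, (A ^ (k - 1 - j)) (A y)⁆
          = (A ^ j) ⁅a, (A ^ (k - j)) y⁆ := by
        intro j hj
        simp only [mem_range] at hj
        congr 2
        rw [show k - j = (k - 1 - j) + 1 by omega, pow_succ, Module.End.mul_apply]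
      rw [h1, ih (A y), Finset.sum_congr rfl h2, hDA y, map_add, h3]
      rw [Finset.sum_range_succ]
      simp only [Nat.add_sub_cancel, Nat.sub_self, pow_zero, Module.End.one_apply]
      abel
  -- the pair-term function
  set g : ℕ → ℕ → L := fun m i =>
    ((((m + 1).factorial : K))⁻¹ * ((i.factorial : K))⁻¹) • ⁅(A ^ m) a, (A ^ i) x⁆ with hg
  -- vanishing of far terms
  have hgzero : ∀ m i : ℕ, M - 1 ≤ m + i → g m i = 0 := by
    intro m i h
    rcases le_or_gt N m with hm | hm
    · simp [hg, hzero m hm]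
    · have hi : N ≤ i := by omega
      simp [hg, hzero i hi]
  -- scalar identity
  have hscal : ∀ k p : ℕ, p < k → ((k.factorial : K))⁻¹ * (k.choose (p + 1) : K)
      = (((p + 1).factorial : K))⁻¹ * (((k - 1 - p).factorial : K))⁻¹ := by
    intro k p hpk
    have h1 : p + 1 ≤ k := hpk
    have hnat := Nat.choose_mul_factorial_mul_factorial h1
    have hcast : (k.choose (p + 1) : K) * ((p + 1).factorial : K) * ((k - (p + 1)).factorial : K)
        = (k.factorial : K) := by exact_mod_cast congrArg (Nat.cast : ℕ → K) hnat
    rw [show k - (p + 1) = k - 1 - p by omega] at hcast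
    have f1 : ((p + 1).factorial : K) ≠ 0 := Nat.cast_ne_zero.mpr (Nat.factorial_ne_zero _)
    have f2 : ((k - 1 - p).factorial : K) ≠ 0 := Nat.cast_ne_zero.mpr (Nat.factorial_ne_zero _)
    have f3 : (k.factorial : K) ≠ 0 := Nat.cast_ne_zero.mpr (Nat.factorial_ne_zero _)
    field_simp
    linear_combination hcast
  -- rewrite all three sums at level M
  rw [hext (fun k => ((k.factorial : K))⁻¹) x,
    hext (fun m => (((m + 1).factorial : K))⁻¹) a,
    hext (fun k => ((k.factorial : K))⁻¹) (D x)]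
  -- expand the left side
  rw [map_sum]
  have hL : ∀ k ∈ range M, D (((k.factorial : K))⁻¹ • (A ^ k) x)
      = ((k.factorial : K))⁻¹ • (A ^ k) (D x)
        + ∑ j ∈ range k, ((k.factorial : K))⁻¹ • (A ^ j) ⁅a, (A ^ (k - 1 - j)) x⁆ := by
    intro k _
    rw [map_smul, hDpow k x, smul_add, Finset.smul_sum]
  rw [Finset.sum_congr rfl hL, Finset.sum_add_distrib]
  -- expand the bracket on the right side
  have hR : ⁅∑ m ∈ range M, (((m + 1).factorial : K))⁻¹ • (A ^ m) a,
        ∑ i ∈ range M, ((i.factorial : K))⁻¹ • (A ^ i) x⁆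
      = ∑ m ∈ range M, ∑ i ∈ range M, g m i := by
    rw [sum_lie_aux]
    refine Finset.sum_congr rfl fun m _ => ?_
    rw [lie_sum_aux]
    refine Finset.sum_congr rfl fun i _ => ?_
    simp only [hg, smul_lie, lie_smul, smul_smul, mul_comm]
  rw [hR, add_comm (∑ m ∈ range M, ∑ i ∈ range M, g m i)]
  congr 1
  -- transform the triangle sum, per k
  have step1 : ∀ k ∈ range M,
      ∑ j ∈ range k, ((k.factorial : K))⁻¹ • (A ^ j) ⁅a, (A ^ (k - 1 - j)) x⁆
      = ∑ p ∈ range k, g p (k - 1 - p) := by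
    intro k _
    have e1 : ∀ j ∈ range k, ((k.factorial : K))⁻¹ • (A ^ j) ⁅a, (A ^ (k - 1 - j)) x⁆
        = ∑ p ∈ range (j + 1),
            (((k.factorial : K))⁻¹ * (j.choose p : K)) • ⁅(A ^ p) a, (A ^ (k - 1 - p)) x⁆ := by
      intro j hj
      simp only [mem_range] at hj
      rw [adp j a ((A ^ (k - 1 - j)) x), Finset.smul_sum]
      refine Finset.sum_congr rfl fun p hp => ?_
      simp only [mem_range] at hp
      have hpow : ((A ^ (j - p)) ((A ^ (k - 1 - j)) x)) = (A ^ (k - 1 - p)) x := by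
        rw [← Module.End.mul_apply, ← pow_add]
        congr 2
        omega
      rw [hpow, ← Nat.cast_smul_eq_nsmul K, smul_smul]
    rw [Finset.sum_congr rfl e1]
    have swap : ∑ j ∈ range k, ∑ p ∈ range (j + 1),
          (((k.factorial : K))⁻¹ * (j.choose p : K)) • ⁅(A ^ p) a, (A ^ (k - 1 - p)) x⁆
        = ∑ p ∈ range k, ∑ j ∈ Finset.Ico p k,
          (((k.factorial : K))⁻¹ * (j.choose p : K)) • ⁅(A ^ p) a, (A ^ (k - 1 - p)) x⁆ := by
      have h := Finset.sum_Ico_Ico_comm 0 k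
        (fun p j => (((k.factorial : K))⁻¹ * (j.choose p : K)) • ⁅(A ^ p) a, (A ^ (k - 1 - p)) x⁆)
      simpa using h.symm
    rw [swap]
    refine Finset.sum_congr rfl fun p hp => ?_
    simp only [mem_range] at hp
    rw [← Finset.sum_smul, ← Finset.mul_sum]
    have hIcc : Finset.Ico p k = Finset.Icc p (k - 1) := by
      have hk : k = (k - 1) + 1 := by omega
      rw [hk, Finset.Ico_add_one_right_eq_Icc, Nat.add_sub_cancel]
    have hcs : ∑ j ∈ Finset.Ico p k, (j.choose p : K)
        = ((k.choose (p + 1) : ℕ) : K) := by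
      rw [hIcc, ← Nat.cast_sum, Nat.sum_Icc_choose, show k - 1 + 1 = k by omega]
    rw [hcs, hscal k p hp]
  rw [Finset.sum_congr rfl step1]
  -- final reindexing of the double sum
  have left : ∑ k ∈ range M, ∑ p ∈ range k, g p (k - 1 - p)
      = ∑ p ∈ range M, ∑ q ∈ range (M - (p + 1)), g p q := by
    have h := (Finset.sum_Ico_Ico_comm' 0 M (fun p k => g p (k - 1 - p))).symm
    simp only [Nat.Ico_zero_eq_range] at h
    rw [h]
    refine Finset.sum_congr rfl fun p hp => ?_
    rw [Finset.sum_Ico_eq_sum_range]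
    refine Finset.sum_congr rfl fun q hq => ?_
    rw [show p + 1 + q - 1 - p = q by omega]
  rw [left]
  refine Finset.sum_congr rfl fun m hm => ?_
  simp only [mem_range] at hm
  refine Finset.sum_subset (Finset.range_subset_range.mpr (by omega)) ?_
  intro i hi hi'
  simp only [mem_range] at hi hi'
  exact hgzero m i (by omega)
end

section
/- Let K be a field of characteristic zero, R an associative unital K-algebra, and a, b ∈ R with a^N = 0 for some natural number N. Writing (ad a)(x) = a·x − x·a and exp(a) = ∑_{k=0}^{N−1} (1/k!) • a^k, one has ∑_{k=0}^{2N−2} (1/(k+1)!) • (∑_{l=0}^{k} a^l · b · a^{k−l}) = (∑_{m=0}^{2N−2} (1/(m+1)!) • (ad a)^m (b)) · exp(a). -/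
open Finset PowerSeries

lemma coeff_one_sub_pow (n k : ℕ) :
    (PowerSeries.coeff (R := ℤ) k) ((1 - PowerSeries.X) ^ n) = (-1) ^ k * n.choose k := by
  rw [sub_pow, map_sum]
  have h : ∀ m ∈ range (n+1),
      (PowerSeries.coeff (R := ℤ) k) ((-1:ℤ⟦X⟧)^(m+n) * 1^m * PowerSeries.X^(n-m) * (n.choose m : ℤ⟦X⟧))
      = ((-1:ℤ)^(m+n) * n.choose m) * if k = n - m then 1 else 0 := by
    intro m _
    have : ((-1:ℤ⟦X⟧)^(m+n) * 1^m * PowerSeries.X^(n-m) * (n.choose m : ℤ⟦X⟧))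
        = PowerSeries.C (R := ℤ) ((-1:ℤ)^(m+n) * n.choose m) * PowerSeries.X^(n-m) := by
      push_cast
      ring_nf
      simp [mul_comm]
      ring
    rw [this, PowerSeries.coeff_C_mul, PowerSeries.coeff_X_pow]
  rw [Finset.sum_congr rfl h]
  by_cases hk : k ≤ n
  · rw [Finset.sum_eq_single (n - k)]
    · rw [if_pos (by omega), mul_one]
      congr 1
      · have : n - k + n = k + 2*(n-k) := by omega
        rw [this, pow_add, pow_mul]
        simp
      · rw [Nat.choose_symm hk]
    · intro m hm hne
      rw [if_neg (by rw [mem_range] at hm; omega), mul_zero]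
    · intro h; exact absurd (mem_range.mpr (by omega)) h
  · rw [Nat.choose_eq_zero_of_lt (by omega)]
    simp only [Int.natCast_zero, mul_zero]
    apply Finset.sum_eq_zero
    intro m hm
    rw [if_neg (by rw [mem_range] at hm; omega), mul_zero]

lemma key_int (p q : ℕ) :
    ∑ s ∈ range (q + 1), (-1 : ℤ) ^ s * (p + s).choose p * (p + q + 1).choose (q - s) = 1 := by
  have h1 : (invOneSubPow ℤ (p+1)).val * (1 - PowerSeries.X) ^ (p + q + 1) = (1 - PowerSeries.X) ^ q := by
    rw [show p + q + 1 = (p + 1) + q by omega, pow_add, ← mul_assoc,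
      ← invOneSubPow_inv_eq_one_sub_pow, Units.val_inv, one_mul]
  have h2 := congrArg (PowerSeries.coeff (R := ℤ) q) h1
  rw [PowerSeries.coeff_mul, coeff_one_sub_pow, Nat.choose_self, Nat.cast_one, mul_one] at h2
  rw [Finset.Nat.sum_antidiagonal_eq_sum_range_succ_mk] at h2
  simp only [invOneSubPow_val_succ_eq_mk_add_choose, PowerSeries.coeff_mk,
    coeff_one_sub_pow] at h2
  calc ∑ s ∈ range (q + 1), (-1 : ℤ) ^ s * (p + s).choose p * (p + q + 1).choose (q - s)
      = (-1:ℤ)^q * ∑ s ∈ range (q+1), ((p + s).choose p : ℤ) * ((-1) ^ (q - s) * (p + q + 1).choose (q - s)) := by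
        rw [Finset.mul_sum]
        refine Finset.sum_congr rfl fun s hs => ?_
        have hsq : s ≤ q := by rw [mem_range] at hs; omega
        have hsgn : (-1:ℤ)^q * (-1:ℤ)^(q-s) = (-1)^s := by
          rw [← pow_add, show q + (q - s) = s + 2*(q-s) by omega, pow_add, pow_mul]
          simp
        rw [← hsgn]; ring
    _ = (-1:ℤ)^q * (-1:ℤ)^q := by rw [h2]
    _ = 1 := by rw [← pow_add, ← two_mul, pow_mul]; simp

lemma sum_triangle {M : Type*} [AddCommMonoid M] {N n : ℕ} (hNn : N ≤ n) (f : ℕ → ℕ → M)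
    (hf : ∀ p q, N ≤ p ∨ N ≤ q → f p q = 0) (hf2 : ∀ p q, n ≤ p + q → f p q = 0) :
    ∑ k ∈ range n, ∑ l ∈ range (k + 1), f l (k - l) =
      ∑ p ∈ range N, ∑ q ∈ range N, f p q := by
  have h1 : ∑ k ∈ range n, ∑ l ∈ range (k + 1), f l (k - l)
      = ∑ x ∈ ((range n ×ˢ range n).filter (fun x => x.1 + x.2 < n)), f x.1 x.2 := by
    rw [Finset.sum_sigma']
    refine Finset.sum_nbij' (fun a => (a.2, a.1 - a.2)) (fun x => ⟨x.1 + x.2, x.1⟩) ?_ ?_ ?_ ?_ ?_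
    · rintro ⟨k, l⟩ ha
      simp only [Finset.mem_sigma, mem_range] at ha
      simp only [Finset.mem_filter, Finset.mem_product, mem_range]
      omega
    · rintro ⟨p, q⟩ hx
      simp only [Finset.mem_filter, Finset.mem_product, mem_range] at hx
      simp only [Finset.mem_sigma, mem_range]
      omega
    · rintro ⟨k, l⟩ ha
      simp only [Finset.mem_sigma, mem_range] at ha
      refine Sigma.ext ?_ ?_ <;> dsimp
      · omega
      · exact HEq.rfl
    · rintro ⟨p, q⟩ hx
      simp only [Finset.mem_filter, Finset.mem_product, mem_range] at hx
      have h' : p + q - p = q := by omega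
      simp [h']
    · rintro ⟨k, l⟩ ha
      rfl
  have hA : ∑ x ∈ ((range n ×ˢ range n).filter (fun x => x.1 + x.2 < n)), f x.1 x.2
      = ∑ x ∈ ((range N ×ˢ range N).filter (fun x => x.1 + x.2 < n)), f x.1 x.2 := by
    refine (Finset.sum_subset (fun x hx => ?_) (fun x hx hx2 => ?_)).symm
    · simp only [Finset.mem_filter, Finset.mem_product, mem_range] at hx ⊢
      omega
    · simp only [Finset.mem_filter, Finset.mem_product, mem_range] at hx hx2
      rcases Nat.lt_or_ge x.1 N with h | h
      · rcases Nat.lt_or_ge x.2 N with h' | h'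
        · exact absurd ⟨⟨h, h'⟩, hx.2⟩ hx2
        · exact hf _ _ (Or.inr h')
      · exact hf _ _ (Or.inl h)
  have hB : ∑ x ∈ (range N ×ˢ range N), f x.1 x.2
      = ∑ x ∈ ((range N ×ˢ range N).filter (fun x => x.1 + x.2 < n)), f x.1 x.2 := by
    refine (Finset.sum_subset (Finset.filter_subset _ _) (fun x hx hx2 => ?_)).symm
    simp only [Finset.mem_filter, Finset.mem_product, mem_range] at hx hx2
    exact hf2 _ _ (by omega)
  rw [h1, hA, ← hB, ← Finset.sum_product']

lemma key_K {K : Type*} [Field K] [CharZero K] (p q : ℕ) :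
    ∑ s ∈ range (q + 1),
      (-1 : K) ^ s * ((p + s).choose p : K) *
        ((((p + s + 1).factorial : K))⁻¹ * (((q - s).factorial : K))⁻¹) =
      (((p + q + 1).factorial : K))⁻¹ := by
  have hcast : ∑ s ∈ range (q + 1),
      (-1 : K) ^ s * ((p + s).choose p : K) * (((p + q + 1).choose (q - s) : K)) = 1 := by
    have h := congrArg (fun z : ℤ => (z : K)) (key_int p q)
    push_cast at h
    exact h
  have hfac : ∀ s ∈ range (q + 1),
      (-1 : K) ^ s * ((p + s).choose p : K) *
        ((((p + s + 1).factorial : K))⁻¹ * (((q - s).factorial : K))⁻¹)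
      = ((((p + q + 1).factorial : K))⁻¹) *
        ((-1 : K) ^ s * ((p + s).choose p : K) * (((p + q + 1).choose (q - s) : K))) := by
    intro s hs
    rw [mem_range] at hs
    have hn : (p + q + 1).choose (q - s) * (q - s).factorial * (p + s + 1).factorial
        = (p + q + 1).factorial := by
      have h := Nat.choose_mul_factorial_mul_factorial (show q - s ≤ p + q + 1 by omega)
      rw [show p + q + 1 - (q - s) = p + s + 1 by omega] at h
      exact h
    have hnK : ((p + q + 1).choose (q - s) : K) * ((q - s).factorial : K) * ((p + s + 1).factorial : K)
        = ((p + q + 1).factorial : K) := by exact_mod_cast congrArg (Nat.cast : ℕ → K) hn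
    have h1 : ((p + s + 1).factorial : K) ≠ 0 := Nat.cast_ne_zero.mpr (Nat.factorial_ne_zero _)
    have h2 : (((q - s).factorial : K)) ≠ 0 := Nat.cast_ne_zero.mpr (Nat.factorial_ne_zero _)
    have h3 : (((p + q + 1).factorial : K)) ≠ 0 := Nat.cast_ne_zero.mpr (Nat.factorial_ne_zero _)
    field_simp
    linear_combination (-((p + s).choose p : K)) * hnK
  rw [Finset.sum_congr rfl hfac, ← Finset.mul_sum, hcast, mul_one]

lemma ad_pow {K R : Type*} [Field K] [Ring R] [Algebra K R] (a b : R) (m : ℕ) :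
    (fun x => a * x - x * a)^[m] b =
      ∑ i ∈ range (m + 1),
        ((-1 : K) ^ (m - i) * (m.choose i : K)) • (a ^ i * b * a ^ (m - i)) := by
  have h0 : (fun x => a * x - x * a)
      = ⇑(LinearMap.mulLeft K a - LinearMap.mulRight K a) := by
    funext x
    simp [LinearMap.sub_apply]
  rw [h0, ← Module.End.pow_apply]
  have hc : Commute (LinearMap.mulLeft K a) (-(LinearMap.mulRight K a)) :=
    (LinearMap.commute_mulLeft_right (R := K) a a).neg_right
  rw [sub_eq_add_neg, hc.add_pow]
  rw [LinearMap.sum_apply]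
  refine Finset.sum_congr rfl fun i hi => ?_
  rw [Module.End.mul_apply, Module.End.mul_apply, Module.End.natCast_apply]
  rw [neg_pow (LinearMap.mulRight K a), LinearMap.pow_mulLeft, LinearMap.pow_mulRight]
  simp only [Module.End.mul_apply, LinearMap.neg_apply, Module.End.one_apply,
    LinearMap.mulLeft_apply, LinearMap.mulRight_apply, LinearMap.smul_apply]
  have hneg : ((-1 : Module.End K R) ^ (m - i)) = (((-1 : ℤ) ^ (m - i) : ℤ) : Module.End K R) := by
    push_cast
    rfl
  rw [hneg, Module.End.intCast_apply, mul_smul]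
  rw [show ((-1 : K) ^ (m - i)) = (((-1 : ℤ) ^ (m - i) : ℤ) : K) by push_cast; ring]
  rw [Int.cast_smul_eq_zsmul, Nat.cast_smul_eq_nsmul]
  simp only [smul_mul_assoc, mul_smul_comm, mul_assoc]

theorem nabla_exp_identity {K R : Type*} [Field K] [CharZero K] [Ring R] [Algebra K R]
    (a b : R) (N : ℕ) (hN : a ^ N = 0) :
    ∑ k ∈ Finset.range (2 * N - 1),
        (((k + 1).factorial : K)⁻¹) • (∑ l ∈ Finset.range (k + 1), a ^ l * b * a ^ (k - l)) =
      (∑ m ∈ Finset.range (2 * N - 1),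
          (((m + 1).factorial : K)⁻¹) • ((fun x => a * x - x * a)^[m] b)) *
        (∑ k ∈ Finset.range N, ((k.factorial : K)⁻¹) • a ^ k) := by
  rcases Nat.eq_zero_or_pos N with h0 | hNpos
  · subst h0; simp
  have hNn : N ≤ 2 * N - 1 := by omega
  have hz : ∀ p : ℕ, N ≤ p → a ^ p = 0 := by
    intro p hp
    rw [show p = N + (p - N) by omega, pow_add, hN, zero_mul]
  -- the canonical common value
  set f : ℕ → ℕ → R := fun p q => (((p + q + 1).factorial : K))⁻¹ • (a ^ p * b * a ^ q) with hfdef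
  have hf : ∀ p q, N ≤ p ∨ N ≤ q → f p q = 0 := by
    intro p q h
    rcases h with h | h
    · simp [hfdef, hz p h]
    · simp [hfdef, hz q h]
  have hf2 : ∀ p q, 2 * N - 1 ≤ p + q → f p q = 0 := by
    intro p q h
    exact hf p q (by omega)
  -- LHS
  have hLHS : ∑ k ∈ Finset.range (2 * N - 1),
      (((k + 1).factorial : K)⁻¹) • (∑ l ∈ Finset.range (k + 1), a ^ l * b * a ^ (k - l))
      = ∑ p ∈ range N, ∑ q ∈ range N, f p q := by
    rw [← sum_triangle hNn f hf hf2]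
    refine Finset.sum_congr rfl fun k hk => ?_
    rw [Finset.smul_sum]
    refine Finset.sum_congr rfl fun l hl => ?_
    rw [mem_range] at hl
    simp only [hfdef]
    rw [show l + (k - l) + 1 = k + 1 by omega]
  rw [hLHS]
  -- RHS
  set g : ℕ → ℕ → R := fun p s => ∑ j ∈ range N,
      ((-1 : K) ^ s * ((p + s).choose p : K) *
        ((((p + s + 1).factorial : K))⁻¹ * ((j.factorial : K))⁻¹)) • (a ^ p * b * a ^ (s + j))
    with hgdef
  have hg : ∀ p s, N ≤ p ∨ N ≤ s → g p s = 0 := by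
    intro p s h
    rcases h with h | h
    · simp [hgdef, hz p h]
    · refine Finset.sum_eq_zero fun j hj => ?_
      rw [hz (s + j) (by omega)]
      simp
  have hg2 : ∀ p s, 2 * N - 1 ≤ p + s → g p s = 0 := fun p s h => hg p s (by omega)
  have hRHS : (∑ m ∈ Finset.range (2 * N - 1),
          (((m + 1).factorial : K)⁻¹) • ((fun x => a * x - x * a)^[m] b)) *
        (∑ k ∈ Finset.range N, ((k.factorial : K)⁻¹) • a ^ k)
      = ∑ m ∈ range (2 * N - 1), ∑ i ∈ range (m + 1), g i (m - i) := by
    rw [Finset.sum_mul]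
    refine Finset.sum_congr rfl fun m hm => ?_
    rw [ad_pow (K := K) a b m, Finset.smul_sum, Finset.sum_mul]
    refine Finset.sum_congr rfl fun i hi => ?_
    rw [mem_range] at hi
    rw [smul_smul, smul_mul_assoc, Finset.mul_sum, Finset.smul_sum]
    simp only [hgdef]
    refine Finset.sum_congr rfl fun j hj => ?_
    rw [mul_smul_comm, smul_smul]
    rw [show i + (m - i) = m by omega]
    rw [show a ^ i * b * a ^ (m - i) * a ^ j = a ^ i * b * a ^ (m - i + j) by
      rw [mul_assoc, ← pow_add]]
    congr 1
    ring
  rw [hRHS, sum_triangle hNn g hg hg2]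
  refine (Finset.sum_congr rfl fun p hp => ?_).symm
  rw [mem_range] at hp
  have hh2 : ∀ s j, N ≤ s + j →
      ((-1 : K) ^ s * ((p + s).choose p : K) *
        ((((p + s + 1).factorial : K))⁻¹ * ((j.factorial : K))⁻¹)) • (a ^ p * b * a ^ (s + j)) = 0 := by
    intro s j h
    rw [hz (s + j) h]
    simp
  have hh : ∀ s j, N ≤ s ∨ N ≤ j →
      ((-1 : K) ^ s * ((p + s).choose p : K) *
        ((((p + s + 1).factorial : K))⁻¹ * ((j.factorial : K))⁻¹)) • (a ^ p * b * a ^ (s + j)) = 0 := by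
    intro s j h
    exact hh2 s j (by omega)
  have h3 := sum_triangle (le_refl N)
    (fun s j => ((-1 : K) ^ s * ((p + s).choose p : K) *
        ((((p + s + 1).factorial : K))⁻¹ * ((j.factorial : K))⁻¹)) • (a ^ p * b * a ^ (s + j)))
    hh hh2
  simp only [hgdef]
  rw [← h3]
  refine Finset.sum_congr rfl fun q hq => ?_
  rw [mem_range] at hq
  have hstep : ∀ s ∈ range (q + 1),
      ((-1 : K) ^ s * ((p + s).choose p : K) *
        ((((p + s + 1).factorial : K))⁻¹ * (((q - s).factorial : K))⁻¹)) • (a ^ p * b * a ^ (s + (q - s)))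
      = ((-1 : K) ^ s * ((p + s).choose p : K) *
        ((((p + s + 1).factorial : K))⁻¹ * (((q - s).factorial : K))⁻¹)) • (a ^ p * b * a ^ q) := by
    intro s hs
    rw [mem_range] at hs
    rw [show s + (q - s) = q by omega]
  rw [Finset.sum_congr rfl hstep, ← Finset.sum_smul, key_K]
end

section
/- Let L be a Lie algebra over a commutative ring, k ≥ 1, and y₁, …, y_k ∈ L such that ⁅y_p, y_q⁆ = 0 whenever |p − q| ≥ 2. Write Lb(y₁, …, y_k) = ⁅…⁅⁅y₁, y₂⁆, y₃⁆, …, y_k⁆ for the left-nested bracket. Then Lb(y₁, …, y_k) = ⁅y₁, ⁅y₂, ⁅…, ⁅y_{k−1}, y_k⁆ …⁆⁆⁆ (the right-nested bracket), and Lb(y₁, …, y_k) = (−1)^{k−1} • Lb(y_k, y_{k−1}, …, y₁). -/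
/-- Left-nested iterated Lie bracket: `leftNest x [y₂, …, y_k] = ⁅…⁅⁅x, y₂⁆, y₃⁆, …, y_k⁆`. -/
def leftNest {L : Type*} [LieRing L] : L → List L → L
  | x, [] => x
  | x, y :: ys => leftNest ⁅x, y⁆ ys

/-- Right-nested iterated Lie bracket:
`rightNest x [y₂, …, y_k] = ⁅x, ⁅y₂, ⁅…, ⁅y_{k−1}, y_k⁆ …⁆⁆⁆`. -/
def rightNest {L : Type*} [LieRing L] : L → List L → L
  | x, [] => x
  | x, y :: ys => ⁅x, rightNest y ys⁆

/-- Left-nested bracket of a list (junk value `0` on the empty list). -/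
def leftNestList {L : Type*} [LieRing L] : List L → L
  | [] => 0
  | x :: ys => leftNest x ys

/-- Right-nested bracket of a list (junk value `0` on the empty list). -/
def rightNestList {L : Type*} [LieRing L] : List L → L
  | [] => 0
  | x :: ys => rightNest x ys

lemma leftNest_bracket {L : Type*} [LieRing L] (x y : L) (ys : List L)
    (h : ∀ z ∈ ys, ⁅x, z⁆ = 0) :
    leftNest ⁅x, y⁆ ys = ⁅x, leftNest y ys⁆ := by
  induction ys generalizing y with
  | nil => rfl
  | cons z zs ih =>
    have hxz : ⁅x, z⁆ = 0 := h z List.mem_cons_self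
    have key : ⁅(⁅x, y⁆ : L), z⁆ = ⁅x, ⁅y, z⁆⁆ := by
      rw [lie_lie, hxz]; simp
    show leftNest ⁅⁅x, y⁆, z⁆ zs = ⁅x, leftNest ⁅y, z⁆ zs⁆
    rw [key, ih ⁅y, z⁆ (fun w hw => h w (List.mem_cons_of_mem _ hw))]

lemma leftNest_append {L : Type*} [LieRing L] (a x : L) (ys : List L) :
    leftNest a (ys ++ [x]) = ⁅leftNest a ys, x⁆ := by
  induction ys generalizing a with
  | nil => rfl
  | cons z zs ih => exact ih ⁅a, z⁆

lemma leftNestList_append {L : Type*} [LieRing L] (x : L) (m : List L) (hm : m ≠ []) :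
    leftNestList (m ++ [x]) = ⁅leftNestList m, x⁆ := by
  cases m with
  | nil => simp at hm
  | cons a rest => exact leftNest_append a x rest

lemma rightNest_rev {L : Type*} [LieRing L] (x : L) (ys : List L) :
    rightNest x ys = ((-1 : ℤ) ^ ys.length) • leftNestList (x :: ys).reverse := by
  induction ys generalizing x with
  | nil => simp [rightNest, leftNestList, leftNest]
  | cons y zs ih =>
    show ⁅x, rightNest y zs⁆ = _
    rw [ih y]
    have hrw : (x :: y :: zs).reverse = (y :: zs).reverse ++ [x] := by simp
    rw [hrw, leftNestList_append x _ (by simp)]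
    rw [lie_smul, ← lie_skew x, List.length_cons, pow_succ, mul_smul]
    simp

lemma part1 {L : Type*} [LieRing L] :
    ∀ (l : List L), (∀ p q : Fin l.length, (p : ℕ) + 2 ≤ (q : ℕ) → ⁅l.get p, l.get q⁆ = 0) →
    leftNestList l = rightNestList l
  | [], _ => rfl
  | [x], _ => rfl
  | x :: y :: zs, h => by
    have hx : ∀ z ∈ zs, ⁅x, z⁆ = 0 := by
      intro z hz
      obtain ⟨i, rfl⟩ := List.mem_iff_get.mp hz
      have := h ⟨0, by simp⟩ ⟨(i : ℕ) + 2, by simp only [List.length_cons]; omega⟩ (by simp)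
      simpa using this
    have htail : leftNestList (y :: zs) = rightNestList (y :: zs) :=
      part1 (y :: zs) (fun p q hpq => by
        have := h p.succ q.succ (by simp only [Fin.val_succ]; omega)
        simpa using this)
    show leftNest ⁅x, y⁆ zs = ⁅x, rightNest y zs⁆
    rw [leftNest_bracket x y zs hx]
    exact congrArg _ htail

theorem nested_bracket_symmetry {R L : Type*} [CommRing R] [LieRing L] [LieAlgebra R L]
    (l : List L) (hl : 1 ≤ l.length)
    (hcomm : ∀ p q : Fin l.length, ((p : ℕ) + 2 ≤ (q : ℕ) ∨ (q : ℕ) + 2 ≤ (p : ℕ)) →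
      ⁅l.get p, l.get q⁆ = 0) :
    leftNestList l = rightNestList l ∧
    leftNestList l = ((-1 : ℤ) ^ (l.length - 1)) • leftNestList l.reverse := by
  have h1 : leftNestList l = rightNestList l :=
    part1 l (fun p q hpq => hcomm p q (Or.inl hpq))
  refine ⟨h1, ?_⟩
  cases l with
  | nil => simp at hl
  | cons x ys =>
    rw [h1]
    show rightNest x ys = _
    rw [rightNest_rev x ys]
    simp
end
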